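/- arXiv:1202.3913 — 11 statements merged into one kernel-verified Lean document; each statement's English description precedes it below -/
import Mathlib

section
/- Let q ≥ 1 and let λ_1 ≥ λ_2 ≥ ... ≥ λ_q > 0 be real numbers. Then there exists a unique integer r with 1 ≤ r ≤ q such that: for every k with 1 ≤ k ≤ r, 1/λ_k < (1/k)(1 + Σ_{j=1}^k 1/λ_j), while for every k with r < k ≤ q, 1/λ_k ≥ (1/k)(1 + Σ_{j=1}^k 1/λ_j). -/
private lemma wits_step (q k : ℕ) (lam : ℕ → ℝ)
    (hpos : ∀ k, 1 ≤ k → k ≤ q → 0 < lam k)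
    (hmono : ∀ k, 1 ≤ k → k + 1 ≤ q → lam (k + 1) ≤ lam k)
    (hk : 1 ≤ k) (hk1 : k + 1 ≤ q)
    (h : (1 / (k : ℝ)) * (1 + ∑ j ∈ Finset.Icc 1 k, 1 / lam j) ≤ 1 / lam k) :
    (1 / ((k + 1 : ℕ) : ℝ)) * (1 + ∑ j ∈ Finset.Icc 1 (k + 1), 1 / lam j)
      ≤ 1 / lam (k + 1) := by
  have hk0 : (0 : ℝ) < (k : ℝ) := by exact_mod_cast hk
  have hlk : 0 < lam k := hpos k hk (by omega)
  have hlk1 : 0 < lam (k + 1) := hpos (k + 1) (by omega) hk1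
  have hμ : 1 / lam k ≤ 1 / lam (k + 1) :=
    one_div_le_one_div_of_le hlk1 (hmono k hk hk1)
  have hsum : ∑ j ∈ Finset.Icc 1 (k + 1), 1 / lam j
      = (∑ j ∈ Finset.Icc 1 k, 1 / lam j) + 1 / lam (k + 1) :=
    Finset.sum_Icc_succ_top (by omega) _
  have h' : 1 + ∑ j ∈ Finset.Icc 1 k, 1 / lam j ≤ (k : ℝ) * (1 / lam k) := by
    rw [one_div, inv_mul_le_iff₀ hk0] at h
    linarith
  have hk10 : (0 : ℝ) < ((k + 1 : ℕ) : ℝ) := by positivity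
  rw [one_div, inv_mul_le_iff₀ hk10, hsum]
  have : (k : ℝ) * (1 / lam k) ≤ (k : ℝ) * (1 / lam (k + 1)) :=
    mul_le_mul_of_nonneg_left hμ hk0.le
  push_cast
  linarith

/-- **Existence and uniqueness of the Witsenhausen index.**
Given `q ≥ 1` and reals `λ_1 ≥ λ_2 ≥ ... ≥ λ_q > 0`, there is a unique integer `r`
with `1 ≤ r ≤ q` such that `1/λ_k < (1/k)(1 + ∑_{j=1}^k 1/λ_j)` for all `1 ≤ k ≤ r`,
and `1/λ_k ≥ (1/k)(1 + ∑_{j=1}^k 1/λ_j)` for all `r < k ≤ q`. -/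
theorem witsenhausen_index_exists_unique
    (q : ℕ) (hq : 1 ≤ q) (lam : ℕ → ℝ)
    (hpos : ∀ k, 1 ≤ k → k ≤ q → 0 < lam k)
    (hmono : ∀ k, 1 ≤ k → k + 1 ≤ q → lam (k + 1) ≤ lam k) :
    ∃! r : ℕ, (1 ≤ r ∧ r ≤ q) ∧
      (∀ k, 1 ≤ k → k ≤ r →
        1 / lam k < (1 / (k : ℝ)) * (1 + ∑ j ∈ Finset.Icc 1 k, 1 / lam j)) ∧
      (∀ k, r < k → k ≤ q →
        (1 / (k : ℝ)) * (1 + ∑ j ∈ Finset.Icc 1 k, 1 / lam j) ≤ 1 / lam k) := by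
  set P : ℕ → Prop := fun k =>
    1 / lam k < (1 / (k : ℝ)) * (1 + ∑ j ∈ Finset.Icc 1 k, 1 / lam j) with hP
  have hP1 : P 1 := by
    have h1 : 0 < lam 1 := hpos 1 le_rfl hq
    simp only [hP, Finset.Icc_self, Finset.sum_singleton, Nat.cast_one]
    rw [one_div (1:ℝ), inv_one, one_mul]
    linarith
  -- propagation of ¬P upward
  have hprop : ∀ m, 1 ≤ m → ¬ P m → ∀ k, m ≤ k → k ≤ q → ¬ P k := by
    intro m hm hPm k hmk
    induction k, hmk using Nat.le_induction with
    | base => intro _; exact hPm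
    | succ n hn ih =>
      intro hnq
      have hnP : ¬ P n := ih (by omega)
      have h := not_lt.mp hnP
      exact not_lt.mpr (wits_step q n lam hpos hmono (by omega) hnq h)
  by_cases hall : ∀ k, 1 ≤ k → k ≤ q → P k
  · refine ⟨q, ⟨⟨hq, le_rfl⟩, fun k h1 h2 => hall k h1 h2, fun k hk hkq => by omega⟩, ?_⟩
    rintro r ⟨⟨hr1, hrq⟩, hA, hB⟩
    by_contra hne
    have hrlt : r < q := lt_of_le_of_ne hrq hne
    exact absurd (hall (r + 1) (by omega) (by omega))
      (not_lt.mpr (hB (r + 1) (by omega) (by omega)))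
  · push_neg at hall
    obtain ⟨k₀, hk₀1, hk₀q, hk₀⟩ := hall
    have hex : ∃ m, 1 ≤ m ∧ m ≤ q ∧ ¬ P m := ⟨k₀, hk₀1, hk₀q, hk₀⟩
    classical
    set m := Nat.find hex with hmdef
    have hspec := Nat.find_spec hex
    rw [← hmdef] at hspec
    obtain ⟨hm1, hmq, hPm⟩ := hspec
    have hmin : ∀ n, 1 ≤ n → n ≤ q → ¬ P n → m ≤ n := fun n h1 h2 h3 => by
      rw [hmdef]; exact Nat.find_min' hex ⟨h1, h2, h3⟩
    have hm2 : 2 ≤ m := by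
      have : m ≠ 1 := fun h => hPm (h ▸ hP1)
      omega
    refine ⟨m - 1, ⟨⟨by omega, by omega⟩, ?_, ?_⟩, ?_⟩
    · intro k hk1 hkm
      by_contra hPk
      have := hmin k hk1 (by omega) hPk
      omega
    · intro k hmk hkq
      exact not_lt.mp (hprop m hm1 hPm k (by omega) hkq)
    · rintro r ⟨⟨hr1, hrq⟩, hA, hB⟩
      by_contra hne
      rcases Nat.lt_or_ge r (m - 1) with h | h
      · have hPk : P (r + 1) := by
          by_contra hPk
          have := hmin (r + 1) (by omega) (by omega) hPk
          omega
        exact absurd hPk (not_lt.mpr (hB (r + 1) (by omega) (by omega)))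
      · have h' : m - 1 < r := by omega
        exact hPm (hA m hm1 (by omega))
end

section
/- Let q ≥ 1, let λ_1 ≥ λ_2 ≥ ... ≥ λ_q > 0 be real numbers, and let r be the Witsenhausen index of (λ_1,...,λ_q). Define M_k := ((1/k)(1 + Σ_{j=1}^k 1/λ_j))^k · Π_{i=1}^k λ_i for k = 1,...,q. Then the sequence M_1, M_2, ..., M_r is strictly increasing, i.e., M_k < M_{k+1} for all 1 ≤ k ≤ r−1. -/
/-- Strict AM-GM type inequality via Bernoulli: for `a ≠ b` positive and `k ≥ 1`,
`a^k * b < ((k*a+b)/(k+1))^(k+1)`. -/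
lemma amgm_strict (k : ℕ) (hk : 1 ≤ k) (a b : ℝ) (ha : 0 < a) (hb : 0 < b)
    (hne : a ≠ b) : a ^ k * b < (((k : ℝ) * a + b) / ((k : ℝ) + 1)) ^ (k + 1) := by
  set c : ℝ := ((k : ℝ) * a + b) / ((k : ℝ) + 1) with hc
  have hk1 : (0:ℝ) < (k : ℝ) + 1 := by positivity
  have hε : (b - a) / (((k : ℝ) + 1) * a) ≠ 0 := by
    apply div_ne_zero (sub_ne_zero.mpr hne.symm)
    positivity
  have hε1 : (-1 : ℝ) ≤ (b - a) / (((k : ℝ) + 1) * a) := by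
    rw [le_div_iff₀ (by positivity)]
    have hk0 : (0:ℝ) ≤ (k:ℝ) := Nat.cast_nonneg k
    nlinarith
  have hp : (1:ℝ) < ((k + 1 : ℕ) : ℝ) := by
    push_cast; have : (1:ℝ) ≤ (k:ℝ) := by exact_mod_cast hk
    linarith
  have key := one_add_mul_self_lt_rpow_one_add hε1 hε hp
  rw [Real.rpow_natCast] at key
  have h1 : 1 + (b - a) / (((k : ℝ) + 1) * a) = c / a := by
    rw [hc]; field_simp; ring
  have h2 : 1 + ((k + 1 : ℕ) : ℝ) * ((b - a) / (((k : ℝ) + 1) * a)) = b / a := by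
    push_cast
    field_simp
    ring
  rw [h1, h2, div_pow, div_lt_div_iff₀ ha (pow_pos ha _)] at key
  have := (mul_lt_mul_iff_of_pos_right ha).mp (by
    calc a ^ k * b * a = b * a ^ (k + 1) := by ring
      _ < c ^ (k + 1) * a := key)
  exact this

/-- Given `λ_1 ≥ ... ≥ λ_q > 0` with Witsenhausen index `r`, the sequence
`M_k := ((1/k)(1 + ∑_{j=1}^k 1/λ_j))^k · ∏_{i=1}^k λ_i` is strictly increasing
for `k = 1, ..., r`, i.e. `M_k < M_{k+1}` for all `1 ≤ k ≤ r - 1`. -/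
theorem M_strictly_increasing
    (q : ℕ) (hq : 1 ≤ q) (lam : ℕ → ℝ)
    (hpos : ∀ k, 1 ≤ k → k ≤ q → 0 < lam k)
    (hmono : ∀ k, 1 ≤ k → k + 1 ≤ q → lam (k + 1) ≤ lam k)
    (r : ℕ) (hr1 : 1 ≤ r) (hrq : r ≤ q)
    (hup : ∀ k, 1 ≤ k → k ≤ r →
      1 / lam k < (1 / (k : ℝ)) * (1 + ∑ j ∈ Finset.Icc 1 k, 1 / lam j))
    (hdown : ∀ k, r < k → k ≤ q →
      (1 / (k : ℝ)) * (1 + ∑ j ∈ Finset.Icc 1 k, 1 / lam j) ≤ 1 / lam k)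
    (M : ℕ → ℝ)
    (hM : ∀ k, M k =
      ((1 / (k : ℝ)) * (1 + ∑ j ∈ Finset.Icc 1 k, 1 / lam j)) ^ k *
        ∏ i ∈ Finset.Icc 1 k, lam i) :
    ∀ k, 1 ≤ k → k + 1 ≤ r → M k < M (k + 1) := by
  intro k hk hkr
  have hkq : k + 1 ≤ q := le_trans hkr hrq
  have hk0 : (0:ℝ) < (k:ℝ) := by exact_mod_cast hk
  -- positivity of lambdas and products on 1..k+1
  have hlam : ∀ j ∈ Finset.Icc 1 (k+1), 0 < lam j := by
    intro j hj
    rw [Finset.mem_Icc] at hj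
    exact hpos j hj.1 (le_trans hj.2 hkq)
  have hlam' : ∀ j ∈ Finset.Icc 1 k, 0 < lam j := fun j hj => by
    rw [Finset.mem_Icc] at hj
    exact hpos j hj.1 (by omega)
  have hP : 0 < ∏ i ∈ Finset.Icc 1 k, lam i := Finset.prod_pos hlam'
  have hlamk1 : 0 < lam (k+1) := hpos (k+1) (by omega) hkq
  -- set up quantities
  set S : ℝ := 1 + ∑ j ∈ Finset.Icc 1 k, 1 / lam j with hS
  have hSpos : 0 < S := by
    have : 0 ≤ ∑ j ∈ Finset.Icc 1 k, 1 / lam j :=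
      Finset.sum_nonneg fun j hj => le_of_lt (one_div_pos.mpr (hlam' j hj))
    rw [hS]; linarith
  set a : ℝ := (1 / (k:ℝ)) * S with ha
  set b : ℝ := 1 / lam (k+1) with hb
  have hapos : 0 < a := by positivity
  have hbpos : 0 < b := by positivity
  -- sum over Icc 1 (k+1)
  have hsum : (1 + ∑ j ∈ Finset.Icc 1 (k+1), 1 / lam j) = S + b := by
    rw [Finset.sum_Icc_succ_top (by omega : 1 ≤ k + 1)]
    rw [hS, hb]; ring
  have hprod : (∏ i ∈ Finset.Icc 1 (k+1), lam i) =
      (∏ i ∈ Finset.Icc 1 k, lam i) * lam (k+1) := by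
    rw [Finset.prod_Icc_succ_top (by omega : 1 ≤ k + 1)]
  have hka : (k:ℝ) * a = S := by
    rw [ha]; field_simp
  -- the Witsenhausen condition at k+1 gives a ≠ b
  have hup' := hup (k+1) (by omega) hkr
  rw [hsum] at hup'
  push_cast at hup'
  have hne : a ≠ b := by
    intro h
    rw [← hb, ← h] at hup'
    have : ((k:ℝ) + 1) * a = S + a := by rw [← hka]; ring
    rw [show (1 / ((k:ℝ)+1)) * (S + a) = a by
      rw [← this]; field_simp] at hup'
    exact lt_irrefl a hup'
  -- main inequality
  have key := amgm_strict k hk a b hapos hbpos hne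
  have hc : ((k:ℝ) * a + b) / ((k:ℝ) + 1) = (1 / ((k:ℝ)+1)) * (S + b) := by
    rw [hka]; ring
  rw [hc] at key
  -- conclude
  rw [hM k, hM (k+1)]
  push_cast
  rw [hsum, hprod]
  have hgoal : a ^ k * (∏ i ∈ Finset.Icc 1 k, lam i) <
      ((1 / ((k:ℝ)+1)) * (S + b)) ^ (k+1) * ((∏ i ∈ Finset.Icc 1 k, lam i) * lam (k+1)) := by
    have h3 : a ^ k * (∏ i ∈ Finset.Icc 1 k, lam i) =
        (a ^ k * b) * ((∏ i ∈ Finset.Icc 1 k, lam i) * lam (k+1)) := by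
      rw [hb]; field_simp
    rw [h3]
    exact mul_lt_mul_of_pos_right key (by positivity)
  exact hgoal
end

section
/- Let q ≥ 1, let Λ_1 ≥ Λ_2 ≥ ... ≥ Λ_q > 0 be real numbers, let r be the Witsenhausen index of (Λ_1,...,Λ_q), and let μ := (1/r)(1 + Σ_{j=1}^r 1/Λ_j) be the water level. Then 1/Λ_k < μ for every k with 1 ≤ k ≤ r, and 1/Λ_k ≥ μ for every k with r < k ≤ q. Consequently, the water-filling powers p_i := max(μ − 1/Λ_i, 0) satisfy p_1 ≥ p_2 ≥ ... ≥ p_r > 0 and p_{r+1} = ... = p_q = 0. -/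
/-- Given `Λ_1 ≥ ... ≥ Λ_q > 0` with Witsenhausen index `r` and water level
`μ := (1/r)(1 + ∑_{j=1}^r 1/Λ_j)`, we have `1/Λ_k < μ` for `1 ≤ k ≤ r` and
`1/Λ_k ≥ μ` for `r < k ≤ q`; consequently the water-filling powers
`p_i := max(μ - 1/Λ_i, 0)` satisfy `p_1 ≥ ... ≥ p_r > 0` and `p_{r+1} = ... = p_q = 0`. -/
theorem water_level_properties
    (q : ℕ) (hq : 1 ≤ q) (Λ : ℕ → ℝ)
    (hpos : ∀ k, 1 ≤ k → k ≤ q → 0 < Λ k)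
    (hmono : ∀ k, 1 ≤ k → k + 1 ≤ q → Λ (k + 1) ≤ Λ k)
    (r : ℕ) (hr1 : 1 ≤ r) (hrq : r ≤ q)
    (hup : ∀ k, 1 ≤ k → k ≤ r →
      1 / Λ k < (1 / (k : ℝ)) * (1 + ∑ j ∈ Finset.Icc 1 k, 1 / Λ j))
    (hdown : ∀ k, r < k → k ≤ q →
      (1 / (k : ℝ)) * (1 + ∑ j ∈ Finset.Icc 1 k, 1 / Λ j) ≤ 1 / Λ k)
    (μ : ℝ) (hμ : μ = (1 / (r : ℝ)) * (1 + ∑ j ∈ Finset.Icc 1 r, 1 / Λ j))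
    (p : ℕ → ℝ) (hp : ∀ i, p i = max (μ - 1 / Λ i) 0) :
    (∀ k, 1 ≤ k → k ≤ r → 1 / Λ k < μ) ∧
    (∀ k, r < k → k ≤ q → μ ≤ 1 / Λ k) ∧
    (∀ i, 1 ≤ i → i + 1 ≤ r → p (i + 1) ≤ p i) ∧
    (∀ i, 1 ≤ i → i ≤ r → 0 < p i) ∧
    (∀ i, r < i → i ≤ q → p i = 0) := by
  -- Λ is antitone on [1, q]
  have hmono' : ∀ a b : ℕ, 1 ≤ a → a ≤ b → b ≤ q → Λ b ≤ Λ a := by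
    intro a b ha hab hbq
    induction b with
    | zero => omega
    | succ n ih =>
      rcases Nat.lt_or_ge a (n + 1) with h | h
      · have h1 : Λ (n + 1) ≤ Λ n := hmono n (by omega) (by omega)
        have h2 : Λ n ≤ Λ a := ih (by omega) (by omega)
        linarith
      · have : a = n + 1 := by omega
        rw [this]
  -- 1/Λ is monotone on [1, q]
  have hinv : ∀ a b : ℕ, 1 ≤ a → a ≤ b → b ≤ q → 1 / Λ a ≤ 1 / Λ b := by
    intro a b ha hab hbq
    exact one_div_le_one_div_of_le (hpos b (by omega) hbq) (hmono' a b ha hab hbq)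
  -- Part 1
  have part1 : ∀ k, 1 ≤ k → k ≤ r → 1 / Λ k < μ := by
    intro k hk1 hkr
    have h1 : 1 / Λ r < μ := by rw [hμ]; exact hup r hr1 le_rfl
    have h2 : 1 / Λ k ≤ 1 / Λ r := hinv k r hk1 hkr hrq
    linarith
  -- Part 2
  have part2 : ∀ k, r < k → k ≤ q → μ ≤ 1 / Λ k := by
    intro k hrk hkq
    have hrq' : r + 1 ≤ q := by omega
    have hd := hdown (r + 1) (by omega) hrq'
    rw [Finset.sum_Icc_succ_top (by omega : 1 ≤ r + 1)] at hd
    set S : ℝ := ∑ j ∈ Finset.Icc 1 r, 1 / Λ j with hS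
    set x : ℝ := 1 / Λ (r + 1) with hx
    have hR : (1 : ℝ) ≤ (r : ℝ) := by exact_mod_cast hr1
    have hR0 : (0 : ℝ) < (r : ℝ) := by linarith
    have hR1 : (0 : ℝ) < (r : ℝ) + 1 := by linarith
    have hcast : ((r + 1 : ℕ) : ℝ) = (r : ℝ) + 1 := by push_cast; ring
    rw [hcast] at hd
    have key : 1 + S + x ≤ ((r : ℝ) + 1) * x := by
      have h3 := mul_le_mul_of_nonneg_left hd hR1.le
      rw [← mul_assoc, mul_one_div, div_self (ne_of_gt hR1), one_mul] at h3
      linarith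
    have hμx : μ ≤ x := by
      rw [hμ, one_div_mul_eq_div, div_le_iff₀ hR0]
      nlinarith
    have h4 : x ≤ 1 / Λ k := hinv (r + 1) k (by omega) (by omega) hkq
    linarith
  refine ⟨part1, part2, ?_, ?_, ?_⟩
  · intro i hi1 hir
    rw [hp, hp]
    have h1 : 1 / Λ i ≤ 1 / Λ (i + 1) := hinv i (i + 1) hi1 (by omega) (by omega)
    exact max_le_max (by linarith) le_rfl
  · intro i hi1 hir
    rw [hp]
    exact lt_max_iff.mpr (Or.inl (by linarith [part1 i hi1 hir]))
  · intro i hri hiq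
    rw [hp]
    exact max_eq_right (by linarith [part2 i hri hiq])
end

section
/- Let q ≥ 1, let Λ_1 ≥ Λ_2 ≥ ... ≥ Λ_q > 0 be real numbers, let r be the Witsenhausen index of (Λ_1,...,Λ_q), and let μ := (1/r)(1 + Σ_{j=1}^r 1/Λ_j). Define p_i := max(μ − 1/Λ_i, 0) for i = 1,...,q. Then Σ_{i=1}^q p_i = 1 and Π_{i=1}^q (1 + Λ_i p_i) = Π_{i=1}^r (μ Λ_i). -/
/-- The water-filling allocation `p_i := max(μ - 1/Λ_i, 0)` satisfies
`∑_{i=1}^q p_i = 1` and `∏_{i=1}^q (1 + Λ_i p_i) = ∏_{i=1}^r (μ Λ_i)`. -/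
theorem waterfilling_value
    (q : ℕ) (hq : 1 ≤ q) (Λ : ℕ → ℝ)
    (hpos : ∀ k, 1 ≤ k → k ≤ q → 0 < Λ k)
    (hmono : ∀ k, 1 ≤ k → k + 1 ≤ q → Λ (k + 1) ≤ Λ k)
    (r : ℕ) (hr1 : 1 ≤ r) (hrq : r ≤ q)
    (hup : ∀ k, 1 ≤ k → k ≤ r →
      1 / Λ k < (1 / (k : ℝ)) * (1 + ∑ j ∈ Finset.Icc 1 k, 1 / Λ j))
    (hdown : ∀ k, r < k → k ≤ q →
      (1 / (k : ℝ)) * (1 + ∑ j ∈ Finset.Icc 1 k, 1 / Λ j) ≤ 1 / Λ k)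
    (μ : ℝ) (hμ : μ = (1 / (r : ℝ)) * (1 + ∑ j ∈ Finset.Icc 1 r, 1 / Λ j))
    (p : ℕ → ℝ) (hp : ∀ i, p i = max (μ - 1 / Λ i) 0) :
    (∑ i ∈ Finset.Icc 1 q, p i = 1) ∧
    (∏ i ∈ Finset.Icc 1 q, (1 + Λ i * p i) = ∏ i ∈ Finset.Icc 1 r, (μ * Λ i)) := by
  -- antitone lemma
  have hanti : ∀ a b, 1 ≤ a → a ≤ b → b ≤ q → Λ b ≤ Λ a := by
    intro a b ha hab hbq
    induction b with
    | zero => omega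
    | succ n ih =>
      rcases Nat.eq_or_lt_of_le hab with h | h
      · rw [h]
      · have hn : a ≤ n := Nat.lt_succ_iff.mp h
        have h1n : 1 ≤ n := le_trans ha hn
        exact le_trans (hmono n h1n hbq) (ih hn (by omega))
  have hrpos : (0:ℝ) < (r:ℝ) := by exact_mod_cast hr1
  -- μ > 1/Λ i for i ≤ r
  have hμr : 1 / Λ r < μ := hμ ▸ hup r hr1 le_rfl
  have hle : ∀ i, 1 ≤ i → i ≤ r → 1 / Λ i < μ := by
    intro i h1 h2
    have hΛr : 0 < Λ r := hpos r hr1 hrq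
    have : Λ r ≤ Λ i := hanti i r h1 h2 hrq
    calc 1 / Λ i ≤ 1 / Λ r := one_div_le_one_div_of_le hΛr this
    _ < μ := hμr
  -- μ ≤ 1/Λ i for i > r
  have hge : ∀ i, r < i → i ≤ q → μ ≤ 1 / Λ i := by
    intro i hri hiq
    have hr1q : r + 1 ≤ q := by omega
    have hkey : μ ≤ 1 / Λ (r+1) := by
      have h := hdown (r+1) (Nat.lt_succ_self r) hr1q
      rw [Finset.sum_Icc_succ_top (by omega : 1 ≤ r + 1)] at h
      have hc : ((r:ℝ)+1) ≠ 0 := by positivity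
      rw [hμ]
      push_cast at h
      set a := 1 / Λ (r+1)
      set S := ∑ j ∈ Finset.Icc 1 r, 1 / Λ j
      have h2 : 1 + (S + a) ≤ a * ((r:ℝ)+1) := by
        rwa [one_div_mul_eq_div, div_le_iff₀ (by positivity)] at h
      rw [div_mul_eq_mul_div, one_mul, div_le_iff₀ hrpos]
      linarith
    have hΛi : 0 < Λ i := hpos i (by omega) hiq
    calc μ ≤ 1 / Λ (r+1) := hkey
    _ ≤ 1 / Λ i := one_div_le_one_div_of_le hΛi (hanti (r+1) i (by omega) hri hiq)
  have hp1 : ∀ i ∈ Finset.Icc 1 r, p i = μ - 1 / Λ i := by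
    intro i hi
    simp only [Finset.mem_Icc] at hi
    rw [hp i, max_eq_left (by linarith [hle i hi.1 hi.2])]
  have hp0 : ∀ i ∈ Finset.Ioc r q, p i = 0 := by
    intro i hi
    simp only [Finset.mem_Ioc] at hi
    rw [hp i, max_eq_right (by linarith [hge i hi.1 hi.2])]
  have hsplit : Finset.Icc 1 q = Finset.Icc 1 r ∪ Finset.Ioc r q := by
    rw [(by exact Finset.Icc_add_one_left_eq_Ioc (a := 0) (b := q) : Finset.Icc 1 q = Finset.Ioc 0 q), (by exact Finset.Icc_add_one_left_eq_Ioc (a := 0) (b := r) : Finset.Icc 1 r = Finset.Ioc 0 r), ← Finset.Ioc_union_Ioc_eq_Ioc (Nat.zero_le r) hrq]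
  have hdisj : Disjoint (Finset.Icc 1 r) (Finset.Ioc r q) := by
    exact Finset.disjoint_left.mpr (by intro x hx hx'; simp only [Finset.mem_Icc, Finset.mem_Ioc] at hx hx'; omega)
  have hcard : (Finset.Icc 1 r).card = r := by simp
  constructor
  · rw [hsplit, Finset.sum_union hdisj, Finset.sum_congr rfl hp1,
      Finset.sum_eq_zero hp0, add_zero, Finset.sum_sub_distrib, Finset.sum_const, hcard,
      nsmul_eq_mul]
    rw [hμ]
    field_simp
    ring
  · rw [hsplit, Finset.prod_union hdisj]
    have h2 : ∏ i ∈ Finset.Ioc r q, (1 + Λ i * p i) = 1 := by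
      apply Finset.prod_eq_one
      intro i hi
      rw [hp0 i hi]; ring
    rw [h2, mul_one]
    apply Finset.prod_congr rfl
    intro i hi
    have hi' := Finset.mem_Icc.mp hi
    have hΛi : Λ i ≠ 0 := ne_of_gt (hpos i hi'.1 (le_trans hi'.2 hrq))
    rw [hp1 i hi]
    field_simp
    ring
end

section
/- Let q ≥ 1, let Λ_1 ≥ Λ_2 ≥ ... ≥ Λ_q > 0 be real numbers, let r be the Witsenhausen index of (Λ_1,...,Λ_q), and let μ := (1/r)(1 + Σ_{j=1}^r 1/Λ_j). Then for every vector (p_1,...,p_q) of nonnegative real numbers with Σ_{i=1}^q p_i ≤ 1, one has Π_{i=1}^q (1 + Λ_i p_i) ≤ Π_{i=1}^r (μ Λ_i). -/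
open Finset

private lemma chainLam (q : ℕ) (Λ : ℕ → ℝ)
    (hmono : ∀ k, 1 ≤ k → k + 1 ≤ q → Λ (k + 1) ≤ Λ k) :
    ∀ a b, 1 ≤ a → a ≤ b → b ≤ q → Λ b ≤ Λ a := by
  intro a b ha hab hbq
  induction b with
  | zero => omega
  | succ n ih =>
    rcases eq_or_lt_of_le hab with h | h
    · rw [h]
    · have han : a ≤ n := by omega
      have h1n : 1 ≤ n := le_trans ha han
      exact le_trans (hmono n h1n hbq) (ih han (by omega))

/-- **Optimality of the water-filling solution.** Given `Λ_1 ≥ ... ≥ Λ_q > 0` with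
Witsenhausen index `r` and water level `μ`, every nonnegative power allocation
`(p_1, ..., p_q)` with `∑_{i=1}^q p_i ≤ 1` satisfies
`∏_{i=1}^q (1 + Λ_i p_i) ≤ ∏_{i=1}^r (μ Λ_i)`. -/
theorem waterfilling_optimal
    (q : ℕ) (hq : 1 ≤ q) (Λ : ℕ → ℝ)
    (hpos : ∀ k, 1 ≤ k → k ≤ q → 0 < Λ k)
    (hmono : ∀ k, 1 ≤ k → k + 1 ≤ q → Λ (k + 1) ≤ Λ k)
    (r : ℕ) (hr1 : 1 ≤ r) (hrq : r ≤ q)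
    (hup : ∀ k, 1 ≤ k → k ≤ r →
      1 / Λ k < (1 / (k : ℝ)) * (1 + ∑ j ∈ Finset.Icc 1 k, 1 / Λ j))
    (hdown : ∀ k, r < k → k ≤ q →
      (1 / (k : ℝ)) * (1 + ∑ j ∈ Finset.Icc 1 k, 1 / Λ j) ≤ 1 / Λ k)
    (μ : ℝ) (hμ : μ = (1 / (r : ℝ)) * (1 + ∑ j ∈ Finset.Icc 1 r, 1 / Λ j))
    (p : ℕ → ℝ) (hpnn : ∀ i, 1 ≤ i → i ≤ q → 0 ≤ p i)
    (hpsum : ∑ i ∈ Finset.Icc 1 q, p i ≤ 1) :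
    ∏ i ∈ Finset.Icc 1 q, (1 + Λ i * p i) ≤ ∏ i ∈ Finset.Icc 1 r, (μ * Λ i) := by
  have chain := chainLam q Λ hmono
  have hrpos : (0:ℝ) < (r:ℝ) := by exact_mod_cast hr1
  have hSnn : 0 ≤ ∑ j ∈ Finset.Icc 1 r, 1 / Λ j := by
    apply Finset.sum_nonneg
    intro j hj
    rw [Finset.mem_Icc] at hj
    exact le_of_lt (div_pos one_pos (hpos j hj.1 (le_trans hj.2 hrq)))
  have hμpos : 0 < μ := by
    rw [hμ]
    apply mul_pos (by positivity)
    linarith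
  have hμr : (r:ℝ) * μ = 1 + ∑ j ∈ Finset.Icc 1 r, 1 / Λ j := by
    rw [hμ]; field_simp
  -- for i > r : μ ≤ 1 / Λ i, hence Λ i ≤ 1/μ
  have key2 : ∀ i, r < i → i ≤ q → Λ i ≤ 1 / μ := by
    intro i hi hiq
    have hrq' : r + 1 ≤ q := by omega
    have hpos1 : 0 < Λ (r+1) := hpos (r+1) (by omega) hrq'
    have h1 : μ ≤ 1 / Λ (r+1) := by
      have hd := hdown (r+1) (by omega) hrq'
      rw [Finset.sum_Icc_succ_top (by omega : 1 ≤ r + 1)] at hd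
      have hc : ((r+1 : ℕ) : ℝ) = (r:ℝ) + 1 := by push_cast; ring
      rw [hc] at hd
      have hr1' : (0:ℝ) < (r:ℝ) + 1 := by linarith
      -- hd : (1/(r+1)) * (1 + S + 1/Λ(r+1)) ≤ 1/Λ(r+1)
      have h2 : 1 + (∑ j ∈ Finset.Icc 1 r, 1 / Λ j) + 1 / Λ (r+1)
          ≤ ((r:ℝ)+1) * (1 / Λ (r+1)) := by
        have := mul_le_mul_of_nonneg_left hd (le_of_lt hr1')
        rw [← mul_assoc, mul_one_div, div_self (ne_of_gt hr1'), one_mul] at this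
        linarith [this]
      rw [← hμr] at h2
      have h3 : (r:ℝ) * μ ≤ (r:ℝ) * (1 / Λ (r+1)) := by linarith
      exact le_of_mul_le_mul_left h3 hrpos
    have h4 : Λ i ≤ Λ (r+1) := chain (r+1) i (by omega) (by omega) hiq
    have h5 : Λ (r+1) ≤ 1 / μ := by
      rw [le_div_iff₀ hμpos]
      rw [le_div_iff₀ hpos1] at h1
      linarith
    linarith
  -- split the product
  have hIcc : ∀ a b : ℕ, Finset.Icc (a+1) b = Finset.Ioc a b := fun a b => Finset.Icc_add_one_left_eq_Ioc a b
  have hsplit : ∀ f : ℕ → ℝ, (∏ i ∈ Finset.Icc 1 r, f i) * ∏ i ∈ Finset.Icc (r+1) q, f i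
      = ∏ i ∈ Finset.Icc 1 q, f i := by
    intro f
    rw [show (1:ℕ) = 0 + 1 from rfl, hIcc, hIcc, hIcc]
    exact Finset.prod_Ioc_consecutive f (Nat.zero_le r) hrq
  have hssplit : ∀ f : ℕ → ℝ, (∑ i ∈ Finset.Icc 1 r, f i) + ∑ i ∈ Finset.Icc (r+1) q, f i
      = ∑ i ∈ Finset.Icc 1 q, f i := by
    intro f
    rw [show (1:ℕ) = 0 + 1 from rfl, hIcc, hIcc, hIcc]
    exact Finset.sum_Ioc_consecutive f (Nat.zero_le r) hrq
  set E : ℝ := (∑ i ∈ Finset.Icc 1 r, ((1 / Λ i + p i) / μ - 1))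
      + ∑ i ∈ Finset.Icc (r+1) q, p i / μ with hE
  have hEle : E ≤ 0 := by
    have h1 : ∑ i ∈ Finset.Icc 1 r, ((1 / Λ i + p i) / μ - 1)
        = ((∑ i ∈ Finset.Icc 1 r, 1 / Λ i) + ∑ i ∈ Finset.Icc 1 r, p i) / μ - r := by
      rw [Finset.sum_sub_distrib, ← Finset.sum_div, Finset.sum_add_distrib, Finset.sum_const,
        Nat.card_Icc]
      simp
    have h2 : ∑ i ∈ Finset.Icc (r+1) q, p i / μ = (∑ i ∈ Finset.Icc (r+1) q, p i) / μ :=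
      (Finset.sum_div _ _ _).symm
    have hP : (∑ i ∈ Finset.Icc 1 r, p i) + ∑ i ∈ Finset.Icc (r+1) q, p i ≤ 1 := by
      rw [hssplit p]; exact hpsum
    rw [hE, h1, h2]
    have hnum : (∑ i ∈ Finset.Icc 1 r, 1 / Λ i) + (∑ i ∈ Finset.Icc 1 r, p i)
        + (∑ i ∈ Finset.Icc (r+1) q, p i) ≤ (r:ℝ) * μ := by
      rw [hμr]; linarith
    calc ((∑ i ∈ Finset.Icc 1 r, 1 / Λ i) + ∑ i ∈ Finset.Icc 1 r, p i) / μ - r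
          + (∑ i ∈ Finset.Icc (r+1) q, p i) / μ
        = ((∑ i ∈ Finset.Icc 1 r, 1 / Λ i) + (∑ i ∈ Finset.Icc 1 r, p i)
          + (∑ i ∈ Finset.Icc (r+1) q, p i)) / μ - r := by ring
      _ ≤ ((r:ℝ) * μ) / μ - r := by gcongr
      _ = 0 := by field_simp; ring
  calc ∏ i ∈ Finset.Icc 1 q, (1 + Λ i * p i)
      = (∏ i ∈ Finset.Icc 1 r, (1 + Λ i * p i))
        * ∏ i ∈ Finset.Icc (r+1) q, (1 + Λ i * p i) := (hsplit _).symm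
    _ ≤ (∏ i ∈ Finset.Icc 1 r, (μ * Λ i * Real.exp ((1 / Λ i + p i) / μ - 1)))
        * ∏ i ∈ Finset.Icc (r+1) q, Real.exp (p i / μ) := by
        apply mul_le_mul
        · apply Finset.prod_le_prod
          · intro i hi
            rw [Finset.mem_Icc] at hi
            have hΛ := hpos i hi.1 (le_trans hi.2 hrq)
            have hp := hpnn i hi.1 (le_trans hi.2 hrq)
            positivity
          · intro i hi
            rw [Finset.mem_Icc] at hi
            have hΛ := hpos i hi.1 (le_trans hi.2 hrq)
            have hp := hpnn i hi.1 (le_trans hi.2 hrq)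
            have heq : 1 + Λ i * p i = μ * Λ i * ((1 / Λ i + p i) / μ) := by
              field_simp
            rw [heq]
            apply mul_le_mul_of_nonneg_left _ (by positivity)
            have := Real.add_one_le_exp ((1 / Λ i + p i) / μ - 1)
            linarith
        · apply Finset.prod_le_prod
          · intro i hi
            rw [Finset.mem_Icc] at hi
            have hΛ := hpos i (by omega) hi.2
            have hp := hpnn i (by omega) hi.2
            positivity
          · intro i hi
            rw [Finset.mem_Icc] at hi
            have hΛ := hpos i (by omega) hi.2
            have hp := hpnn i (by omega) hi.2
            have h1 : Λ i * p i ≤ (1 / μ) * p i :=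
              mul_le_mul_of_nonneg_right (key2 i (by omega) hi.2) hp
            have := Real.add_one_le_exp (p i / μ)
            have h2 : (1 / μ) * p i = p i / μ := by ring
            linarith
        · apply Finset.prod_nonneg
          intro i hi
          rw [Finset.mem_Icc] at hi
          have hΛ := hpos i (by omega) hi.2
          have hp := hpnn i (by omega) hi.2
          positivity
        · apply Finset.prod_nonneg
          intro i hi
          rw [Finset.mem_Icc] at hi
          have hΛ := hpos i hi.1 (le_trans hi.2 hrq)
          positivity
    _ = (∏ i ∈ Finset.Icc 1 r, (μ * Λ i)) * Real.exp E := by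
        rw [Finset.prod_mul_distrib, ← Real.exp_sum, ← Real.exp_sum, hE, mul_assoc,
          ← Real.exp_add]
    _ ≤ (∏ i ∈ Finset.Icc 1 r, (μ * Λ i)) * 1 := by
        apply mul_le_mul_of_nonneg_left
        · rw [← Real.exp_zero]
          exact Real.exp_le_exp.mpr hEle
        · apply Finset.prod_nonneg
          intro i hi
          rw [Finset.mem_Icc] at hi
          have hΛ := hpos i hi.1 (le_trans hi.2 hrq)
          positivity
    _ = ∏ i ∈ Finset.Icc 1 r, (μ * Λ i) := mul_one _
end

section
/- Let D be a real symmetric K×K matrix with an orthonormal basis of eigenvectors v_1,...,v_K ∈ ℝ^K satisfying D v_i = λ_i v_i, let σ > 0, let m ≥ 1, and let f : {1,...,m} → {1,...,K} be any function. For each i let m_i := #{k ∈ {1,...,m} : f(k) = i}. Then det(I_K + σ^{−2} (Σ_{k=1}^m v_{f(k)} v_{f(k)}ᵀ) D) = Π_{i=1}^K (1 + λ_i m_i / σ²). -/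
open Matrix

lemma vecMulVec_mulVec' {K : ℕ} (a b x : Fin K → ℝ) :
    vecMulVec a b *ᵥ x = (b ⬝ᵥ x) • a := by
  funext i
  simp [vecMulVec_apply, mulVec, dotProduct, Finset.mul_sum, mul_comm, mul_assoc,
    mul_left_comm]

/-- **Determinant identity for eigenvector compressors.**
If `D` is real symmetric with orthonormal eigenvectors `v_1, ..., v_K` (with
`D v_i = λ_i v_i`), `σ > 0`, and each of `m` compressors is some eigenvector
`v_{f(k)}`, then with `m_i` the multiplicity of `v_i` among the selections,
`det(I_K + σ⁻² (∑_k v_{f(k)} v_{f(k)}ᵀ) D) = ∏_i (1 + λ_i m_i / σ²)`. -/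
theorem eigenvector_compressors_det
    (K : ℕ) (D : Matrix (Fin K) (Fin K) ℝ) (hsymm : D.IsSymm)
    (v : Fin K → EuclideanSpace ℝ (Fin K)) (lam : Fin K → ℝ)
    (horth : ∀ i j, v i ⬝ᵥ v j = if i = j then (1 : ℝ) else 0)
    (heig : ∀ i, D *ᵥ v i = lam i • (v i : Fin K → ℝ))
    (σ : ℝ) (hσ : 0 < σ)
    (m : ℕ) (hm : 1 ≤ m) (f : Fin m → Fin K)
    (mult : Fin K → ℕ)
    (hmult : ∀ i, mult i = (Finset.univ.filter (fun k => f k = i)).card) :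
    (1 + (σ ^ 2)⁻¹ • ((∑ k, vecMulVec (v (f k)) (v (f k))) * D)).det
      = ∏ i, (1 + lam i * (mult i : ℝ) / σ ^ 2) := by
  classical
  set S : Matrix (Fin K) (Fin K) ℝ := ∑ k, vecMulVec (v (f k)) (v (f k)) with hS
  set M : Matrix (Fin K) (Fin K) ℝ := 1 + (σ ^ 2)⁻¹ • (S * D) with hM
  set V : Matrix (Fin K) (Fin K) ℝ := Matrix.of fun a i => v i a with hV
  -- orthogonality of V
  have hVtV : Vᵀ * V = 1 := by
    ext i j
    have := horth i j
    simpa [Matrix.mul_apply, hV, Matrix.one_apply, dotProduct] using this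
  have hdetV : V.det * V.det = 1 := by
    have := congrArg Matrix.det hVtV
    simpa [Matrix.det_mul, Matrix.det_transpose] using this
  -- S acts on v j as mult j • v j
  have hSv : ∀ j, S *ᵥ (v j : Fin K → ℝ) = (mult j : ℝ) • (v j : Fin K → ℝ) := by
    intro j
    have hsum : S *ᵥ (v j : Fin K → ℝ)
        = ∑ k, (vecMulVec (v (f k)) (v (f k))) *ᵥ (v j : Fin K → ℝ) := by
      rw [hS]
      funext a
      simp [mulVec, dotProduct, Finset.sum_apply, Matrix.sum_apply, Finset.sum_mul]
      rw [Finset.sum_comm]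
    rw [hsum]
    have : ∀ k, (vecMulVec (v (f k)) (v (f k))) *ᵥ (v j : Fin K → ℝ)
        = (if f k = j then (1:ℝ) else 0) • (v (f k) : Fin K → ℝ) := by
      intro k
      rw [vecMulVec_mulVec' (v (f k)) (v (f k)) (v j), horth (f k) j]
    rw [Finset.sum_congr rfl fun k _ => this k]
    have : ∑ k, (if f k = j then (1:ℝ) else 0) • (v (f k) : Fin K → ℝ)
        = ∑ k ∈ Finset.univ.filter (fun k => f k = j), (v j : Fin K → ℝ) := by
      rw [Finset.sum_filter]
      refine Finset.sum_congr rfl fun k _ => ?_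
      by_cases h : f k = j <;> simp [h]
    rw [this, Finset.sum_const, hmult j]
    simp [← Nat.cast_smul_eq_nsmul ℝ]
  have hsm : ∀ (c : ℝ) (j : Fin K) (a : Fin K), (c • (v j : Fin K → ℝ)) a = c * v j a :=
    fun _ _ _ => rfl
  -- M acts on v j by scaling
  have hMv : ∀ j, M *ᵥ (v j : Fin K → ℝ)
      = (1 + lam j * (mult j : ℝ) / σ ^ 2) • (v j : Fin K → ℝ) := by
    intro j
    rw [hM, Matrix.add_mulVec, Matrix.one_mulVec, Matrix.smul_mulVec,
      ← Matrix.mulVec_mulVec, heig j, Matrix.mulVec_smul, hSv j]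
    funext a
    simp only [hsm, Pi.add_apply, Pi.smul_apply, Pi.one_apply, smul_eq_mul]
    ring
  -- matrix identity M * V = V * diagonal
  have hMV : M * V = V * Matrix.diagonal (fun i => 1 + lam i * (mult i : ℝ) / σ ^ 2) := by
    ext a j
    have h1 : (M * V) a j = (M *ᵥ (v j : Fin K → ℝ)) a := by
      simp [Matrix.mul_apply, mulVec, dotProduct, hV]
    rw [h1, hMv j]
    rw [hsm, Matrix.mul_diagonal]
    rw [hV]
    exact mul_comm _ _
  -- take determinants
  have hdet := congrArg Matrix.det hMV
  rw [Matrix.det_mul, Matrix.det_mul, Matrix.det_diagonal] at hdet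
  have : M.det * (V.det * V.det) = (∏ i, (1 + lam i * (mult i : ℝ) / σ ^ 2)) * (V.det * V.det) := by
    calc M.det * (V.det * V.det) = (M.det * V.det) * V.det := by ring
    _ = (V.det * ∏ i, (1 + lam i * (mult i : ℝ) / σ ^ 2)) * V.det := by rw [hdet]
    _ = (∏ i, (1 + lam i * (mult i : ℝ) / σ ^ 2)) * (V.det * V.det) := by ring
  rw [hdetV, mul_one, mul_one] at this
  simpa [hM, hS] using this
end

section
/- Let N ≥ 1, m ≥ 1, let Λ_1 ≥ Λ_2 ≥ ... ≥ Λ_N > 0 be real numbers, set q := min(m, N), let r be the Witsenhausen index of (Λ_1,...,Λ_q), and let μ := (1/r)(1 + Σ_{j=1}^r 1/Λ_j). Suppose (n_1,...,n_N) ∈ ℕ^N with Σ_{i=1}^N n_i = m maximizes Π_{i=1}^N (1 + Λ_i n_i/m) over all such integer allocations. Then for every k with n_k > 0, μ − 1/m < n_k/m + 1/Λ_k < μ + 1/m. Moreover, there exists a maximizing allocation with n_i = 0 for all i > r. -/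
lemma OAH_subset_sum (N : ℕ) (f : ℕ → ℝ)
    (hf : ∀ a b, 1 ≤ a → a ≤ b → b ≤ N → f a ≤ f b) :
    ∀ (s : ℕ) (S : Finset ℕ), S ⊆ Finset.Icc 1 N → S.card = s →
      ∑ i ∈ Finset.Icc 1 s, f i ≤ ∑ i ∈ S, f i := by
  intro s
  induction s with
  | zero =>
    intro S hS hcard
    simp [Finset.card_eq_zero.mp hcard]
  | succ t ih =>
    intro S hS hcard
    have hne : S.Nonempty := Finset.card_pos.mp (by omega)
    set M := S.max' hne with hM
    have hMS : M ∈ S := S.max'_mem hne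
    have hMN : M ∈ Finset.Icc 1 N := hS hMS
    have hM1 : 1 ≤ M := (Finset.mem_Icc.mp hMN).1
    have hMN' : M ≤ N := (Finset.mem_Icc.mp hMN).2
    have hsubM : S ⊆ Finset.Icc 1 M := by
      intro x hx
      exact Finset.mem_Icc.mpr ⟨(Finset.mem_Icc.mp (hS hx)).1, S.le_max' x hx⟩
    have hcardM : t + 1 ≤ M := by
      have := Finset.card_le_card hsubM
      rw [hcard, Nat.card_Icc] at this
      omega
    have herase : (S.erase M).card = t := by
      rw [Finset.card_erase_of_mem hMS, hcard]
      omega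
    have hsub' : S.erase M ⊆ Finset.Icc 1 N :=
      (Finset.erase_subset M S).trans hS
    have hIH := ih (S.erase M) hsub' herase
    have hfM : f (t + 1) ≤ f M := hf (t+1) M (by omega) hcardM hMN'
    have hsplit : ∑ i ∈ S, f i = f M + ∑ i ∈ S.erase M, f i :=
      (Finset.add_sum_erase S f hMS).symm
    rw [Finset.sum_Icc_succ_top (by omega : 1 ≤ t + 1), hsplit]
    linarith

lemma OAH_exch_alg (Λi Λj a b m : ℝ) (hΛi : 0 < Λi) (hΛj : 0 < Λj) (hm : 0 < m)
    (hineq : (1 + Λi * (a - 1) / m) * (1 + Λj * (b + 1) / m)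
      ≤ (1 + Λi * a / m) * (1 + Λj * b / m)) :
    a / m + 1 / Λi ≤ b / m + 1 / Λj + 1 / m := by
  have id1 : (1 + Λi * a / m) * (1 + Λj * b / m)
      - (1 + Λi * (a - 1) / m) * (1 + Λj * (b + 1) / m)
      = Λi / m - Λj / m + (Λi / m) * (Λj / m) * (b + 1 - a) := by
    field_simp
    ring
  have key : 0 ≤ Λi / m - Λj / m + (Λi / m) * (Λj / m) * (b + 1 - a) := by
    linarith
  have hc : 0 < Λi * Λj / m := by positivity
  have e : (Λi * Λj / m) * ((b / m + 1 / Λj + 1 / m) - (a / m + 1 / Λi))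
      = Λi / m - Λj / m + (Λi / m) * (Λj / m) * (b + 1 - a) := by
    field_simp
    ring
  have h2 : 0 ≤ (b / m + 1 / Λj + 1 / m) - (a / m + 1 / Λi) :=
    (mul_nonneg_iff_of_pos_left hc).mp (by rw [e]; exact key)
  linarith

lemma OAH_exch_alg' (Λi Λj a b m : ℝ) (hΛi : 0 < Λi) (hΛj : 0 < Λj) (hm : 0 < m)
    (hineq : b / m + 1 / Λj + 1 / m ≤ a / m + 1 / Λi) :
    (1 + Λi * a / m) * (1 + Λj * b / m)
      ≤ (1 + Λi * (a - 1) / m) * (1 + Λj * (b + 1) / m) := by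
  have hc : 0 < Λi * Λj / m := by positivity
  have e : (Λi * Λj / m) * ((b / m + 1 / Λj + 1 / m) - (a / m + 1 / Λi))
      = Λi / m - Λj / m + (Λi / m) * (Λj / m) * (b + 1 - a) := by
    field_simp
    ring
  have key : Λi / m - Λj / m + (Λi / m) * (Λj / m) * (b + 1 - a) ≤ 0 := by
    rw [← e]
    exact mul_nonpos_of_nonneg_of_nonpos hc.le (by linarith)
  have id1 : (1 + Λi * a / m) * (1 + Λj * b / m)
      - (1 + Λi * (a - 1) / m) * (1 + Λj * (b + 1) / m)
      = Λi / m - Λj / m + (Λi / m) * (Λj / m) * (b + 1 - a) := by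
    field_simp
    ring
  linarith

set_option maxHeartbeats 2000000 in
/-- **Necessary condition for an optimal block-filling allocation.**
If the integer allocation `(n_1, ..., n_N)` of `m` blocks maximizes
`∏_{i=1}^N (1 + Λ_i n_i/m)`, then every channel `k` with `n_k > 0` has final height
`n_k/m + 1/Λ_k` within `(μ − 1/m, μ + 1/m)`, and there is a maximizing allocation
supported on the first `r` channels. -/
theorem optimal_allocation_heights
    (N m : ℕ) (hN : 1 ≤ N) (hm : 1 ≤ m) (Λ : ℕ → ℝ)
    (hpos : ∀ i, 1 ≤ i → i ≤ N → 0 < Λ i)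
    (hmono : ∀ i, 1 ≤ i → i + 1 ≤ N → Λ (i + 1) ≤ Λ i)
    (q : ℕ) (hq : q = min m N)
    (r : ℕ) (hr1 : 1 ≤ r) (hrq : r ≤ q)
    (hup : ∀ k, 1 ≤ k → k ≤ r →
      1 / Λ k < (1 / (k : ℝ)) * (1 + ∑ j ∈ Finset.Icc 1 k, 1 / Λ j))
    (hdown : ∀ k, r < k → k ≤ q →
      (1 / (k : ℝ)) * (1 + ∑ j ∈ Finset.Icc 1 k, 1 / Λ j) ≤ 1 / Λ k)
    (μ : ℝ) (hμ : μ = (1 / (r : ℝ)) * (1 + ∑ j ∈ Finset.Icc 1 r, 1 / Λ j))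
    (n : ℕ → ℕ) (hsum : ∑ i ∈ Finset.Icc 1 N, n i = m)
    (hopt : ∀ n' : ℕ → ℕ, ∑ i ∈ Finset.Icc 1 N, n' i = m →
      ∏ i ∈ Finset.Icc 1 N, (1 + Λ i * (n' i : ℝ) / m)
        ≤ ∏ i ∈ Finset.Icc 1 N, (1 + Λ i * (n i : ℝ) / m)) :
    (∀ k, 1 ≤ k → k ≤ N → 0 < n k →
      μ - 1 / (m : ℝ) < (n k : ℝ) / m + 1 / Λ k ∧
      (n k : ℝ) / m + 1 / Λ k < μ + 1 / (m : ℝ)) ∧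
    (∃ n'' : ℕ → ℕ, (∑ i ∈ Finset.Icc 1 N, n'' i = m) ∧
      (∀ i, r < i → i ≤ N → n'' i = 0) ∧
      (∀ n' : ℕ → ℕ, ∑ i ∈ Finset.Icc 1 N, n' i = m →
        ∏ i ∈ Finset.Icc 1 N, (1 + Λ i * (n' i : ℝ) / m)
          ≤ ∏ i ∈ Finset.Icc 1 N, (1 + Λ i * (n'' i : ℝ) / m))) := by
  have hm0 : (0:ℝ) < m := by exact_mod_cast hm
  have hr0 : (0:ℝ) < r := by exact_mod_cast hr1
  have hrN : r ≤ N := le_trans hrq (by omega)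
  have hrm : r ≤ m := le_trans hrq (by omega)
  have hqN : q ≤ N := by omega
  have hqm : q ≤ m := by omega
  -- Λ is nonincreasing on [1, N]
  have monoΛ : ∀ a, 1 ≤ a → ∀ b, a ≤ b → b ≤ N → Λ b ≤ Λ a := by
    intro a ha b
    induction b with
    | zero => intro h1 _; omega
    | succ c ih =>
      intro hab hbN
      rcases Nat.lt_or_ge a (c+1) with h | h
      · have hac : a ≤ c := by omega
        exact le_trans (hmono c (le_trans ha hac) hbN) (ih hac (by omega))
      · have : a = c + 1 := by omega
        rw [this]
  have hinv_mono : ∀ a b, 1 ≤ a → a ≤ b → b ≤ N → 1 / Λ a ≤ 1 / Λ b := by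
    intro a b ha hab hb
    exact one_div_le_one_div_of_le (hpos b (le_trans ha hab) hb) (monoΛ a ha b hab hb)
  have fact1 : ∀ j, 1 ≤ j → j ≤ r → 1 / Λ j < μ := by
    intro j h1 hjr
    calc 1 / Λ j ≤ 1 / Λ r := hinv_mono j r h1 hjr hrN
    _ < μ := by rw [hμ]; exact hup r hr1 le_rfl
  have Mfact : ∀ k, r ≤ k → k ≤ q →
      μ ≤ (1 / (k : ℝ)) * (1 + ∑ j ∈ Finset.Icc 1 k, 1 / Λ j) := by
    intro k hk
    induction k, hk using Nat.le_induction with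
    | base => intro _; rw [hμ]
    | succ c hc ih =>
      intro hcq
      have ihc := ih (by omega)
      have hd := hdown (c+1) (by omega) hcq
      have hc0 : (0:ℝ) < c := by exact_mod_cast (lt_of_lt_of_le Nat.zero_lt_one (le_trans hr1 hc))
      have hc1 : ((c+1:ℕ):ℝ) = (c:ℝ) + 1 := by push_cast; ring
      have hS : ∑ j ∈ Finset.Icc 1 (c+1), 1 / Λ j
          = (∑ j ∈ Finset.Icc 1 c, 1 / Λ j) + 1 / Λ (c+1) :=
        Finset.sum_Icc_succ_top (by omega) _
      set S := ∑ j ∈ Finset.Icc 1 c, 1 / Λ j with hSdef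
      set x := 1 / Λ (c+1) with hxdef
      rw [hS, hc1] at hd ⊢
      have hd' : 1 + (S + x) ≤ x * ((c:ℝ) + 1) := by
        rw [one_div, inv_mul_eq_div, div_le_iff₀ (by linarith)] at hd
        linarith
      have ihc' : μ * (c:ℝ) ≤ 1 + S := by
        rw [one_div, inv_mul_eq_div, le_div_iff₀ hc0] at ihc
        linarith
      have hx : μ ≤ x := by
        have h1 : 1 + S ≤ x * (c:ℝ) := by linarith
        nlinarith
      rw [one_div, inv_mul_eq_div, le_div_iff₀ (by linarith : (0:ℝ) < (c:ℝ)+1)]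
      nlinarith
  have fact2 : ∀ k, r < k → k ≤ q → μ ≤ 1 / Λ k := by
    intro k hk hkq
    exact le_trans (Mfact k hk.le hkq) (hdown k hk hkq)
  have head_sum : ∑ j ∈ Finset.Icc 1 r, 1 / Λ j = r * μ - 1 := by
    have hr0' : (r:ℝ) ≠ 0 := ne_of_gt hr0
    have hrμ : (r:ℝ) * μ = 1 + ∑ j ∈ Finset.Icc 1 r, 1 / Λ j := by
      rw [hμ]
      field_simp
    linarith
  -- factor positivity
  have hfacpos : ∀ x, 1 ≤ x → x ≤ N → ∀ v : ℕ, 0 < 1 + Λ x * (v:ℝ)/m := by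
    intro x h1 h2 v
    have h3 := hpos x h1 h2
    have h4 : 0 ≤ Λ x * (v:ℝ)/m := by positivity
    linarith
  -- split a product at two distinct indices
  have hsplit : ∀ (v : ℕ → ℕ) (i j : ℕ), i ∈ Finset.Icc 1 N → j ∈ Finset.Icc 1 N →
      j ≠ i →
      ∏ x ∈ Finset.Icc 1 N, (1 + Λ x * (v x : ℝ)/m)
        = (1 + Λ i * (v i : ℝ)/m) * ((1 + Λ j * (v j : ℝ)/m) *
            ∏ x ∈ ((Finset.Icc 1 N).erase i).erase j, (1 + Λ x * (v x : ℝ)/m)) := by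
    intro v i j hi hj hji
    rw [← Finset.mul_prod_erase (Finset.Icc 1 N) _ hi,
      ← Finset.mul_prod_erase ((Finset.Icc 1 N).erase i) _
        (Finset.mem_erase.mpr ⟨hji, hj⟩)]
  have hasplit : ∀ (w : ℕ → ℕ) (i j : ℕ), i ∈ Finset.Icc 1 N → j ∈ Finset.Icc 1 N →
      j ≠ i →
      ∑ x ∈ Finset.Icc 1 N, w x
        = w i + (w j + ∑ x ∈ ((Finset.Icc 1 N).erase i).erase j, w x) := by
    intro w i j hi hj hji
    rw [← Finset.add_sum_erase (Finset.Icc 1 N) _ hi,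
      ← Finset.add_sum_erase ((Finset.Icc 1 N).erase i) _
        (Finset.mem_erase.mpr ⟨hji, hj⟩)]
  -- the "move one block from i to j" operation
  have hmove_sum : ∀ (v : ℕ → ℕ) (i j : ℕ), i ∈ Finset.Icc 1 N → j ∈ Finset.Icc 1 N →
      i ≠ j → 0 < v i →
      ∑ x ∈ Finset.Icc 1 N, (Function.update (Function.update v i (v i - 1)) j (v j + 1)) x
        = ∑ x ∈ Finset.Icc 1 N, v x := by
    intro v i j hi hj hij hvi
    set w := Function.update (Function.update v i (v i - 1)) j (v j + 1) with hw
    have hwi : w i = v i - 1 := by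
      rw [hw, Function.update_of_ne hij, Function.update_self]
    have hwj : w j = v j + 1 := by rw [hw, Function.update_self]
    have hwx : ∀ x, x ≠ i → x ≠ j → w x = v x := by
      intro x hxi hxj
      rw [hw, Function.update_of_ne hxj, Function.update_of_ne hxi]
    rw [hasplit w i j hi hj (Ne.symm hij), hasplit v i j hi hj (Ne.symm hij)]
    have hrest : ∑ x ∈ ((Finset.Icc 1 N).erase i).erase j, w x
        = ∑ x ∈ ((Finset.Icc 1 N).erase i).erase j, v x := by
      refine Finset.sum_congr rfl fun x hx => ?_
      have hxj : x ≠ j := (Finset.mem_erase.mp hx).1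
      have hxi : x ≠ i := (Finset.mem_erase.mp (Finset.mem_erase.mp hx).2).1
      exact hwx x hxi hxj
    rw [hwi, hwj, hrest]
    omega
  -- exchange inequality from optimality
  have exch : ∀ (v : ℕ → ℕ), (∑ x ∈ Finset.Icc 1 N, v x = m) →
      (∀ n' : ℕ → ℕ, ∑ x ∈ Finset.Icc 1 N, n' x = m →
        ∏ x ∈ Finset.Icc 1 N, (1 + Λ x * (n' x : ℝ) / m)
          ≤ ∏ x ∈ Finset.Icc 1 N, (1 + Λ x * (v x : ℝ) / m)) →
      ∀ i j, i ∈ Finset.Icc 1 N → j ∈ Finset.Icc 1 N → i ≠ j → 0 < v i →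
      (v i : ℝ)/m + 1/Λ i ≤ (v j : ℝ)/m + 1/Λ j + 1/m := by
    intro v hvsum hvopt i j hi hj hij hvi
    set w := Function.update (Function.update v i (v i - 1)) j (v j + 1) with hw
    have hwi : w i = v i - 1 := by
      rw [hw, Function.update_of_ne hij, Function.update_self]
    have hwj : w j = v j + 1 := by rw [hw, Function.update_self]
    have hwx : ∀ x, x ≠ i → x ≠ j → w x = v x := by
      intro x hxi hxj
      rw [hw, Function.update_of_ne hxj, Function.update_of_ne hxi]
    have hwsum : ∑ x ∈ Finset.Icc 1 N, w x = m := by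
      rw [hw, hmove_sum v i j hi hj hij hvi, hvsum]
    have hle := hvopt w hwsum
    rw [hsplit w i j hi hj (Ne.symm hij), hsplit v i j hi hj (Ne.symm hij)] at hle
    have hrest : ∏ x ∈ ((Finset.Icc 1 N).erase i).erase j, (1 + Λ x * (w x : ℝ)/m)
        = ∏ x ∈ ((Finset.Icc 1 N).erase i).erase j, (1 + Λ x * (v x : ℝ)/m) := by
      refine Finset.prod_congr rfl fun x hx => ?_
      have hxj : x ≠ j := (Finset.mem_erase.mp hx).1
      have hxi : x ≠ i := (Finset.mem_erase.mp (Finset.mem_erase.mp hx).2).1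
      rw [hwx x hxi hxj]
    rw [hrest] at hle
    have hQpos : 0 < ∏ x ∈ ((Finset.Icc 1 N).erase i).erase j, (1 + Λ x * (v x : ℝ)/m) := by
      refine Finset.prod_pos fun x hx => ?_
      have hxN : x ∈ Finset.Icc 1 N :=
        Finset.mem_of_mem_erase (Finset.mem_of_mem_erase hx)
      exact hfacpos x (Finset.mem_Icc.mp hxN).1 (Finset.mem_Icc.mp hxN).2 _
    rw [← mul_assoc, ← mul_assoc] at hle
    have hle2 := le_of_mul_le_mul_right hle hQpos
    have hcasti : ((w i : ℕ) : ℝ) = (v i : ℝ) - 1 := by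
      rw [hwi]
      push_cast [Nat.cast_sub hvi]
      ring
    have hcastj : ((w j : ℕ) : ℝ) = (v j : ℝ) + 1 := by
      rw [hwj]; push_cast; ring
    rw [hcasti, hcastj] at hle2
    exact OAH_exch_alg (Λ i) (Λ j) (v i) (v j) m
      (hpos i (Finset.mem_Icc.mp hi).1 (Finset.mem_Icc.mp hi).2)
      (hpos j (Finset.mem_Icc.mp hj).1 (Finset.mem_Icc.mp hj).2) hm0 hle2
  -- a profitable move preserves optimality
  have move_opt : ∀ (v : ℕ → ℕ), (∑ x ∈ Finset.Icc 1 N, v x = m) →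
      (∀ n' : ℕ → ℕ, ∑ x ∈ Finset.Icc 1 N, n' x = m →
        ∏ x ∈ Finset.Icc 1 N, (1 + Λ x * (n' x : ℝ) / m)
          ≤ ∏ x ∈ Finset.Icc 1 N, (1 + Λ x * (v x : ℝ) / m)) →
      ∀ i j, i ∈ Finset.Icc 1 N → j ∈ Finset.Icc 1 N → i ≠ j → 0 < v i →
      ((v j : ℝ)/m + 1/Λ j + 1/m ≤ (v i : ℝ)/m + 1/Λ i) →
      (∑ x ∈ Finset.Icc 1 N,
          (Function.update (Function.update v i (v i - 1)) j (v j + 1)) x = m) ∧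
      (∀ n' : ℕ → ℕ, ∑ x ∈ Finset.Icc 1 N, n' x = m →
        ∏ x ∈ Finset.Icc 1 N, (1 + Λ x * (n' x : ℝ) / m)
          ≤ ∏ x ∈ Finset.Icc 1 N,
              (1 + Λ x * ((Function.update (Function.update v i (v i - 1)) j (v j + 1)) x : ℝ) / m)) := by
    intro v hvsum hvopt i j hi hj hij hvi hcond
    set w := Function.update (Function.update v i (v i - 1)) j (v j + 1) with hw
    have hwi : w i = v i - 1 := by
      rw [hw, Function.update_of_ne hij, Function.update_self]
    have hwj : w j = v j + 1 := by rw [hw, Function.update_self]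
    have hwx : ∀ x, x ≠ i → x ≠ j → w x = v x := by
      intro x hxi hxj
      rw [hw, Function.update_of_ne hxj, Function.update_of_ne hxi]
    have hwsum : ∑ x ∈ Finset.Icc 1 N, w x = m := by
      rw [hw, hmove_sum v i j hi hj hij hvi, hvsum]
    refine ⟨hwsum, fun n' hn' => le_trans (hvopt n' hn') ?_⟩
    rw [hsplit w i j hi hj (Ne.symm hij), hsplit v i j hi hj (Ne.symm hij)]
    have hrest : ∏ x ∈ ((Finset.Icc 1 N).erase i).erase j, (1 + Λ x * (w x : ℝ)/m)
        = ∏ x ∈ ((Finset.Icc 1 N).erase i).erase j, (1 + Λ x * (v x : ℝ)/m) := by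
      refine Finset.prod_congr rfl fun x hx => ?_
      have hxj : x ≠ j := (Finset.mem_erase.mp hx).1
      have hxi : x ≠ i := (Finset.mem_erase.mp (Finset.mem_erase.mp hx).2).1
      rw [hwx x hxi hxj]
    rw [hrest]
    have hQpos : 0 < ∏ x ∈ ((Finset.Icc 1 N).erase i).erase j, (1 + Λ x * (v x : ℝ)/m) := by
      refine Finset.prod_pos fun x hx => ?_
      have hxN : x ∈ Finset.Icc 1 N :=
        Finset.mem_of_mem_erase (Finset.mem_of_mem_erase hx)
      exact hfacpos x (Finset.mem_Icc.mp hxN).1 (Finset.mem_Icc.mp hxN).2 _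
    rw [← mul_assoc, ← mul_assoc]
    refine mul_le_mul_of_nonneg_right ?_ hQpos.le
    have hcasti : ((w i : ℕ) : ℝ) = (v i : ℝ) - 1 := by
      rw [hwi]
      push_cast [Nat.cast_sub hvi]
      ring
    have hcastj : ((w j : ℕ) : ℝ) = (v j : ℝ) + 1 := by
      rw [hwj]; push_cast; ring
    rw [hcasti, hcastj]
    exact OAH_exch_alg' (Λ i) (Λ j) (v i) (v j) m
      (hpos i (Finset.mem_Icc.mp hi).1 (Finset.mem_Icc.mp hi).2)
      (hpos j (Finset.mem_Icc.mp hj).1 (Finset.mem_Icc.mp hj).2) hm0 hcond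
  have card_Icc1 : ∀ x : ℕ, (Finset.Icc 1 x).card = x := by
    intro x; rw [Nat.card_Icc]; omega
  have hIoc : ∀ x : ℕ, Finset.Icc 1 x = Finset.Ioc 0 x := by
    intro x
    rw [← Finset.Icc_add_one_left_eq_Ioc, zero_add]
  have head_n_le : ∀ v : ℕ → ℕ, (∑ x ∈ Finset.Icc 1 N, v x = m) →
      ∑ j ∈ Finset.Icc 1 r, v j ≤ m := by
    intro v hv
    rw [← hv]
    exact Finset.sum_le_sum_of_subset (Finset.Icc_subset_Icc_right hrN)
  have head_height_le : ∀ v : ℕ → ℕ, (∑ x ∈ Finset.Icc 1 N, v x = m) →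
      ∑ j ∈ Finset.Icc 1 r, ((v j : ℝ)/m + 1/Λ j) ≤ r * μ := by
    intro v hv
    have h1 : ∑ j ∈ Finset.Icc 1 r, ((v j : ℝ)/m + 1/Λ j)
        = (∑ j ∈ Finset.Icc 1 r, (v j : ℝ))/m + (r*μ - 1) := by
      rw [Finset.sum_add_distrib, head_sum, Finset.sum_div]
    have h2 : ∑ j ∈ Finset.Icc 1 r, (v j : ℝ) ≤ (m : ℝ) := by
      exact_mod_cast head_n_le v hv
    have h3 : (∑ j ∈ Finset.Icc 1 r, (v j : ℝ))/m ≤ 1 :=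
      div_le_one_of_le₀ h2 hm0.le
    rw [h1]
    linarith
  have h8 : ∑ i ∈ Finset.Icc 1 r, (μ - 1/Λ i) = 1 := by
    rw [Finset.sum_sub_distrib, Finset.sum_const, nsmul_eq_mul, card_Icc1, head_sum]
    ring
  have hm1 : (0:ℝ) < 1/m := by positivity
  constructor
  · -- Part 1
    intro k hk1 hkN hnk
    have hkIcc : k ∈ Finset.Icc 1 N := Finset.mem_Icc.mpr ⟨hk1, hkN⟩
    constructor
    · -- lower bound
      by_contra hcon
      push_neg at hcon
      set supp := (Finset.Icc 1 N).filter (fun i => n i ≠ 0) with hsuppdef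
      have hsupp_sub : supp ⊆ Finset.Icc 1 N := Finset.filter_subset _ _
      have hksupp : k ∈ supp :=
        Finset.mem_filter.mpr ⟨hkIcc, Nat.pos_iff_ne_zero.mp hnk⟩
      have hsupp_sumn : ∑ i ∈ supp, n i = m := by
        rw [hsuppdef, Finset.sum_filter_ne_zero]
        exact hsum
      set s := supp.card with hs
      have hsm : s ≤ m := by
        have h1 : s • 1 ≤ ∑ i ∈ supp, n i :=
          Finset.card_nsmul_le_sum supp n 1
            (fun i hi => Nat.one_le_iff_ne_zero.mpr (Finset.mem_filter.mp hi).2)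
        simpa [hsupp_sumn] using h1
      have hsN : s ≤ N := by
        have := Finset.card_le_card hsupp_sub
        rwa [card_Icc1] at this
      have hsq : s ≤ q := by omega
      have hall : ∀ i ∈ supp, (n i : ℝ)/m + 1/Λ i ≤ μ := by
        intro i hi
        obtain ⟨hiIcc, hine⟩ := Finset.mem_filter.mp hi
        by_cases hik : i = k
        · subst hik; linarith
        · have := exch n hsum hopt i k hiIcc hkIcc hik (Nat.pos_of_ne_zero hine)
          linarith
      have c1 : (1:ℝ) = ∑ i ∈ supp, (n i : ℝ)/m := by
        rw [← Finset.sum_div]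
        have hc : ∑ i ∈ supp, (n i : ℝ) = (m : ℝ) := by exact_mod_cast hsupp_sumn
        rw [hc, div_self (ne_of_gt hm0)]
      have c3 : ∑ i ∈ supp, (n i : ℝ)/m < ∑ i ∈ supp, (μ - 1/Λ i) := by
        refine Finset.sum_lt_sum (fun i hi => ?_) ⟨k, hksupp, ?_⟩
        · have := hall i hi; linarith
        · linarith
      have c4 : ∑ i ∈ supp, (μ - 1/Λ i) = s*μ - ∑ i ∈ supp, 1/Λ i := by
        rw [Finset.sum_sub_distrib, Finset.sum_const, nsmul_eq_mul]
      have c5 : ∑ i ∈ Finset.Icc 1 s, 1/Λ i ≤ ∑ i ∈ supp, 1/Λ i :=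
        OAH_subset_sum N (fun i => 1/Λ i) hinv_mono s supp hsupp_sub hs.symm
      have c7 : ∑ i ∈ Finset.Icc 1 s, (μ - 1/Λ i)
          = s*μ - ∑ i ∈ Finset.Icc 1 s, 1/Λ i := by
        rw [Finset.sum_sub_distrib, Finset.sum_const, nsmul_eq_mul, card_Icc1]
      have c6 : ∑ i ∈ Finset.Icc 1 s, (μ - 1/Λ i) ≤ 1 := by
        rcases le_or_gt s r with hsr | hrs
        · have hsub : Finset.Icc 1 s ⊆ Finset.Icc 1 r := Finset.Icc_subset_Icc_right hsr
          have h7 : ∑ i ∈ Finset.Icc 1 s, (μ - 1/Λ i)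
              ≤ ∑ i ∈ Finset.Icc 1 r, (μ - 1/Λ i) := by
            refine Finset.sum_le_sum_of_subset_of_nonneg hsub (fun i hi _ => ?_)
            have hi' := Finset.mem_Icc.mp hi
            have := fact1 i hi'.1 hi'.2
            linarith
          linarith
        · have hsplit2 : (∑ i ∈ Finset.Ioc 0 r, (μ - 1/Λ i))
              + ∑ i ∈ Finset.Ioc r s, (μ - 1/Λ i)
              = ∑ i ∈ Finset.Ioc 0 s, (μ - 1/Λ i) :=
            Finset.sum_Ioc_consecutive _ (Nat.zero_le r) hrs.le
          have h9 : ∑ i ∈ Finset.Ioc r s, (μ - 1/Λ i) ≤ 0 := by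
            refine Finset.sum_nonpos fun i hi => ?_
            have hi' := Finset.mem_Ioc.mp hi
            have := fact2 i hi'.1 (le_trans hi'.2 hsq)
            linarith
          rw [hIoc s, ← hsplit2, ← hIoc r]
          linarith
      linarith
    · -- upper bound
      by_contra hcon
      push_neg at hcon
      have hge : ∀ j ∈ Finset.Icc 1 r, μ ≤ (n j : ℝ)/m + 1/Λ j := by
        intro j hj
        have hjIcc : j ∈ Finset.Icc 1 N := Finset.Icc_subset_Icc_right hrN hj
        by_cases hjk : j = k
        · subst hjk; linarith
        · have := exch n hsum hopt k j hkIcc hjIcc (fun h => hjk h.symm) hnk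
          linarith
      have hA : ∑ j ∈ Finset.Icc 1 r, ((n j : ℝ)/m + 1/Λ j) ≤ r*μ :=
        head_height_le n hsum
      have hB : (r:ℝ)*μ ≤ ∑ j ∈ Finset.Icc 1 r, ((n j : ℝ)/m + 1/Λ j) := by
        have h1 := Finset.sum_le_sum hge
        rw [Finset.sum_const, card_Icc1, nsmul_eq_mul] at h1
        exact h1
      have hEq : ∑ j ∈ Finset.Icc 1 r, ((n j : ℝ)/m + 1/Λ j) = r*μ :=
        le_antisymm hA hB
      have heach : ∀ j ∈ Finset.Icc 1 r, (n j : ℝ)/m + 1/Λ j = μ := by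
        have hzero : ∑ j ∈ Finset.Icc 1 r, ((n j : ℝ)/m + 1/Λ j - μ) = 0 := by
          rw [Finset.sum_sub_distrib, hEq, Finset.sum_const, card_Icc1, nsmul_eq_mul]
          ring
        intro j hj
        have := (Finset.sum_eq_zero_iff_of_nonneg
          (fun i hi => by have := hge i hi; linarith)).mp hzero j hj
        linarith
      have hheadm : ∑ j ∈ Finset.Icc 1 r, n j = m := by
        have h1 : ∑ j ∈ Finset.Icc 1 r, ((n j : ℝ)/m + 1/Λ j)
            = (∑ j ∈ Finset.Icc 1 r, (n j : ℝ))/m + (r*μ - 1) := by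
          rw [Finset.sum_add_distrib, head_sum, Finset.sum_div]
        have h2 : (∑ j ∈ Finset.Icc 1 r, (n j : ℝ)) = (m:ℝ) := by
          rw [h1] at hEq
          have h3 : (∑ j ∈ Finset.Icc 1 r, (n j : ℝ))/m = 1 := by linarith
          rw [div_eq_one_iff_eq (ne_of_gt hm0)] at h3
          exact h3
        exact_mod_cast h2
      have hkr : k ≤ r := by
        by_contra hkr
        push_neg at hkr
        have hsplitN : (∑ i ∈ Finset.Ioc 0 r, n i) + ∑ i ∈ Finset.Ioc r N, n i
            = ∑ i ∈ Finset.Ioc 0 N, n i :=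
          Finset.sum_Ioc_consecutive _ (Nat.zero_le r) hrN
        rw [← hIoc r, ← hIoc N, hheadm, hsum] at hsplitN
        have htail : ∑ i ∈ Finset.Ioc r N, n i = 0 := by omega
        have hk' : k ∈ Finset.Ioc r N := Finset.mem_Ioc.mpr ⟨hkr, hkN⟩
        have := (Finset.sum_eq_zero_iff.mp htail) k hk'
        omega
      have := heach k (Finset.mem_Icc.mpr ⟨hk1, hkr⟩)
      linarith
  · -- Part 2
    have main2 : ∀ (t : ℕ) (v : ℕ → ℕ), (∑ x ∈ Finset.Icc 1 N, v x = m) →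
        (∀ n' : ℕ → ℕ, ∑ x ∈ Finset.Icc 1 N, n' x = m →
          ∏ x ∈ Finset.Icc 1 N, (1 + Λ x * (n' x : ℝ)/m)
            ≤ ∏ x ∈ Finset.Icc 1 N, (1 + Λ x * (v x : ℝ)/m)) →
        (∑ x ∈ Finset.Ioc r N, v x = t) →
        ∃ n'' : ℕ → ℕ, (∑ i ∈ Finset.Icc 1 N, n'' i = m) ∧
          (∀ i, r < i → i ≤ N → n'' i = 0) ∧
          (∀ n' : ℕ → ℕ, ∑ i ∈ Finset.Icc 1 N, n' i = m →
            ∏ i ∈ Finset.Icc 1 N, (1 + Λ i * (n' i : ℝ) / m)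
              ≤ ∏ i ∈ Finset.Icc 1 N, (1 + Λ i * (n'' i : ℝ) / m)) := by
      intro t
      induction t with
      | zero =>
        intro v hv hvopt htail
        exact ⟨v, hv, fun i hri hiN =>
          (Finset.sum_eq_zero_iff.mp htail) i (Finset.mem_Ioc.mpr ⟨hri, hiN⟩), hvopt⟩
      | succ t ih =>
        intro v hv hvopt htail
        have hex : ∃ i ∈ Finset.Ioc r N, v i ≠ 0 := by
          by_contra hno
          push_neg at hno
          have hz : ∑ x ∈ Finset.Ioc r N, v x = 0 :=
            Finset.sum_eq_zero (fun x hx => hno x hx)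
          omega
        obtain ⟨i, hiIoc, hvi0⟩ := hex
        have hiIoc' := Finset.mem_Ioc.mp hiIoc
        have hi1 : 1 ≤ i := by omega
        have hiN : i ≤ N := hiIoc'.2
        have hri : r < i := hiIoc'.1
        have hiIcc : i ∈ Finset.Icc 1 N := Finset.mem_Icc.mpr ⟨hi1, hiN⟩
        have hvi : 0 < v i := Nat.pos_of_ne_zero hvi0
        have hjex : ∃ j ∈ Finset.Icc 1 r,
            (v j : ℝ)/m + 1/Λ j + 1/m ≤ (v i : ℝ)/m + 1/Λ i := by
          by_contra hno
          push_neg at hno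
          rcases le_or_gt μ (1/Λ i) with hcase | hcase
          · have h1 : (1:ℝ)/m ≤ (v i:ℝ)/m := by
              gcongr <;> first | exact hm0.le | exact_mod_cast hvi
            have hhi : μ + 1/m ≤ (v i:ℝ)/m + 1/Λ i := by linarith
            have hstrict : ∀ j ∈ Finset.Icc 1 r, μ < (v j:ℝ)/m + 1/Λ j := by
              intro j hj
              have := hno j hj
              linarith
            have hlt : (r:ℝ)*μ < ∑ j ∈ Finset.Icc 1 r, ((v j:ℝ)/m + 1/Λ j) := by
              have h2 := Finset.sum_lt_sum_of_nonempty
                (Finset.nonempty_Icc.mpr hr1) hstrict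
              rwa [Finset.sum_const, card_Icc1, nsmul_eq_mul] at h2
            have := head_height_le v hv
            linarith
          · have hiq : q < i := by
              by_contra hqi
              push_neg at hqi
              exact absurd (fact2 i hri hqi) (not_le.mpr hcase)
            have hvj_ge : ∀ j ∈ Finset.Icc 1 r, v i ≤ v j := by
              intro j hj
              have hj' := Finset.mem_Icc.mp hj
              have hinv := hinv_mono j i hj'.1 (by omega) hiN
              have h2 := hno j hj
              have h4 : (v i:ℝ)/m < (v j:ℝ)/m + 1/m := by linarith
              rw [← add_div] at h4
              have h3 : (v i:ℝ) < (v j:ℝ) + 1 := by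
                have := (div_lt_div_iff_of_pos_right hm0).mp h4
                exact_mod_cast this
              have h5 : v i < v j + 1 := by exact_mod_cast h3
              omega
            have hbound : r * v i + v i ≤ m := by
              have hins : i ∉ Finset.Icc 1 r := by
                simp only [Finset.mem_Icc, not_and, not_le]
                omega
              have hsub : insert i (Finset.Icc 1 r) ⊆ Finset.Icc 1 N := by
                intro x hx
                rcases Finset.mem_insert.mp hx with h | h
                · subst h; exact hiIcc
                · exact Finset.Icc_subset_Icc_right hrN h
              have h1 : ∑ x ∈ insert i (Finset.Icc 1 r), v x ≤ m := by
                rw [← hv]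
                exact Finset.sum_le_sum_of_subset hsub
              rw [Finset.sum_insert hins] at h1
              have h2 : r * v i ≤ ∑ x ∈ Finset.Icc 1 r, v x := by
                have h3 := Finset.card_nsmul_le_sum (Finset.Icc 1 r) v (v i) hvj_ge
                rwa [card_Icc1, smul_eq_mul] at h3
              omega
            have hrm' : r + 1 ≤ m := by
              have := Nat.mul_le_mul_left r hvi
              omega
            have hmu : μ ≤ 1/Λ i := by
              have hf2 := fact2 (r+1) (by omega) (by omega)
              have hmono2 := hinv_mono (r+1) i (by omega) (by omega) hiN
              linarith
            linarith
        obtain ⟨j, hjr, hcond⟩ := hjex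
        have hj' := Finset.mem_Icc.mp hjr
        have hjIcc : j ∈ Finset.Icc 1 N := Finset.Icc_subset_Icc_right hrN hjr
        have hij : i ≠ j := by omega
        obtain ⟨hwsum, hwopt⟩ := move_opt v hv hvopt i j hiIcc hjIcc hij hvi hcond
        set w := Function.update (Function.update v i (v i - 1)) j (v j + 1) with hw
        have hwtail : ∑ x ∈ Finset.Ioc r N, w x = t := by
          have hwi : w i = v i - 1 := by
            rw [hw, Function.update_of_ne hij, Function.update_self]
          have h1 : ∑ x ∈ Finset.Ioc r N, w x
              = w i + ∑ x ∈ (Finset.Ioc r N).erase i, w x :=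
            (Finset.add_sum_erase _ _ hiIoc).symm
          have h2 : ∑ x ∈ Finset.Ioc r N, v x
              = v i + ∑ x ∈ (Finset.Ioc r N).erase i, v x :=
            (Finset.add_sum_erase _ _ hiIoc).symm
          have h3 : ∑ x ∈ (Finset.Ioc r N).erase i, w x
              = ∑ x ∈ (Finset.Ioc r N).erase i, v x := by
            refine Finset.sum_congr rfl fun x hx => ?_
            have hxi : x ≠ i := (Finset.mem_erase.mp hx).1
            have hxIoc := Finset.mem_Ioc.mp (Finset.mem_of_mem_erase hx)
            have hxj : x ≠ j := by omega
            rw [hw, Function.update_of_ne hxj, Function.update_of_ne hxi]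
          rw [h2] at htail
          rw [h1, hwi, h3]
          omega
        exact ih w hwsum hwopt hwtail
    exact main2 (∑ x ∈ Finset.Ioc r N, n x) n hsum hopt rfl
end

section
/- Let N ≥ 1, m ≥ 1, let Λ_1 ≥ Λ_2 ≥ ... ≥ Λ_N > 0 be real numbers, set q := min(m, N), let r be the Witsenhausen index of (Λ_1,...,Λ_q), and let μ := (1/r)(1 + Σ_{j=1}^r 1/Λ_j). Define the greedy allocation recursively: n^{(0)} = (0,...,0), and n^{(t+1)} is obtained from n^{(t)} by adding 1 to the coordinate i_t, where i_t is the smallest index i ∈ {1,...,N} minimizing 1/Λ_i + n^{(t)}_i/m. Then the final greedy allocation n^{(m)} satisfies: for every k with n^{(m)}_k > 0, μ − 1/m < n^{(m)}_k/m + 1/Λ_k < μ + 1/m, and n^{(m)}_i = 0 for all i > r. -/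
open scoped Classical in
/-- The index (smallest, among those of lowest current height `1/Λ_i + n_i/m`)
in `S` to which the greedy block-filling policy adds the next block. -/
noncomputable def greedyStep (Λ : ℕ → ℝ) (m : ℕ) (S : Finset ℕ) (n : ℕ → ℕ) : ℕ :=
  let height : ℕ → ℝ := fun i => 1 / Λ i + (n i : ℝ) / m
  let T := S.filter fun i => ∀ j ∈ S, height i ≤ height j
  if h : T.Nonempty then T.min' h else 0

/-- The greedy block-filling allocation after `t` steps: start from the zero
allocation and at each step add one block to the channel in `S` of currently
lowest height, breaking ties by smallest index. -/
noncomputable def greedyAlloc (Λ : ℕ → ℝ) (m : ℕ) (S : Finset ℕ) : ℕ → ℕ → ℕ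
  | 0, _ => 0
  | t + 1, i =>
    greedyAlloc Λ m S t i + if i = greedyStep Λ m S (greedyAlloc Λ m S t) then 1 else 0

open scoped Classical in
lemma greedyStep_spec (Λ : ℕ → ℝ) (m : ℕ) (S : Finset ℕ) (hS : S.Nonempty) (n : ℕ → ℕ) :
    greedyStep Λ m S n ∈ S ∧
    (∀ j ∈ S, 1 / Λ (greedyStep Λ m S n) + (n (greedyStep Λ m S n) : ℝ) / m ≤ 1 / Λ j + (n j : ℝ) / m) ∧
    (∀ j ∈ S, 1 / Λ j + (n j : ℝ) / m ≤ 1 / Λ (greedyStep Λ m S n) + (n (greedyStep Λ m S n) : ℝ) / m →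
      greedyStep Λ m S n ≤ j) := by
  set height : ℕ → ℝ := fun i => 1 / Λ i + (n i : ℝ) / m with hh
  obtain ⟨i0, hi0, hmin⟩ := S.exists_min_image height hS
  have hTne : (S.filter fun i => ∀ j ∈ S, height i ≤ height j).Nonempty :=
    ⟨i0, Finset.mem_filter.mpr ⟨hi0, hmin⟩⟩
  have hstep : greedyStep Λ m S n = (S.filter fun i => ∀ j ∈ S, height i ≤ height j).min' hTne := by
    rw [greedyStep]
    exact dif_pos hTne
  have hmem := (S.filter fun i => ∀ j ∈ S, height i ≤ height j).min'_mem hTne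
  rw [Finset.mem_filter] at hmem
  refine ⟨hstep ▸ hmem.1, fun j hj => hstep ▸ hmem.2 j hj, fun j hj hle => ?_⟩
  rw [hstep] at hle ⊢
  exact Finset.min'_le _ _ (Finset.mem_filter.mpr ⟨hj, fun l hl => le_trans hle (hmem.2 l hl)⟩)


/-- **Greedy block-filling allocation heights.** After `m` steps of the greedy
policy on channels `{1, ..., N}`, every channel `k` receiving a block has final
height `n_k/m + 1/Λ_k` within `(μ − 1/m, μ + 1/m)`, and channels beyond the
Witsenhausen index `r` receive no blocks. -/
theorem greedy_allocation_heights
    (N m : ℕ) (hN : 1 ≤ N) (hm : 1 ≤ m) (Λ : ℕ → ℝ)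
    (hpos : ∀ i, 1 ≤ i → i ≤ N → 0 < Λ i)
    (hmono : ∀ i, 1 ≤ i → i + 1 ≤ N → Λ (i + 1) ≤ Λ i)
    (q : ℕ) (hq : q = min m N)
    (r : ℕ) (hr1 : 1 ≤ r) (hrq : r ≤ q)
    (hup : ∀ k, 1 ≤ k → k ≤ r →
      1 / Λ k < (1 / (k : ℝ)) * (1 + ∑ j ∈ Finset.Icc 1 k, 1 / Λ j))
    (hdown : ∀ k, r < k → k ≤ q →
      (1 / (k : ℝ)) * (1 + ∑ j ∈ Finset.Icc 1 k, 1 / Λ j) ≤ 1 / Λ k)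
    (μ : ℝ) (hμ : μ = (1 / (r : ℝ)) * (1 + ∑ j ∈ Finset.Icc 1 r, 1 / Λ j))
    (g : ℕ → ℕ) (hg : g = greedyAlloc Λ m (Finset.Icc 1 N) m) :
    (∀ k, 1 ≤ k → k ≤ N → 0 < g k →
      μ - 1 / (m : ℝ) < (g k : ℝ) / m + 1 / Λ k ∧
      (g k : ℝ) / m + 1 / Λ k < μ + 1 / (m : ℝ)) ∧
    (∀ i, r < i → i ≤ N → g i = 0) := by
  subst hg hq
  set S : Finset ℕ := Finset.Icc 1 N with hS
  have hSne : S.Nonempty := ⟨1, by simp [hS, hN]⟩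
  have hm0 : (0:ℝ) < (m:ℝ) := by exact_mod_cast hm
  have hr0 : (0:ℝ) < (r:ℝ) := by exact_mod_cast hr1
  set n : ℕ → ℕ → ℕ := greedyAlloc Λ m S with hn
  set c : ℕ → ℕ := fun t => greedyStep Λ m S (n t) with hc
  set H : ℕ → ℕ → ℝ := fun t i => 1 / Λ i + (n t i : ℝ) / m with hH
  have hrec : ∀ t i, n (t+1) i = n t i + if i = c t then 1 else 0 := fun t i => rfl
  have hzero : ∀ i, n 0 i = 0 := fun i => rfl
  have spec : ∀ t, c t ∈ S ∧ (∀ j ∈ S, H t (c t) ≤ H t j) ∧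
      (∀ j ∈ S, H t j ≤ H t (c t) → c t ≤ j) := fun t => greedyStep_spec Λ m S hSne (n t)
  -- ranges
  have hrN : r ≤ N := le_trans hrq (min_le_right m N)
  have hIccS : Finset.Icc 1 r ⊆ S := Finset.Icc_subset_Icc_right hrN
  -- monotonicity of Λ over the range
  have hΛmono : ∀ a b, 1 ≤ a → a ≤ b → b ≤ N → Λ b ≤ Λ a := by
    intro a b ha hab hbN
    induction b, hab using Nat.le_induction with
    | base => exact le_refl _
    | succ b hab ih =>
      exact le_trans (hmono b (le_trans ha hab) hbN) (ih (le_trans (Nat.le_succ b) hbN))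
  have hinv_mono : ∀ a b, 1 ≤ a → a ≤ b → b ≤ N → 1 / Λ a ≤ 1 / Λ b := by
    intro a b ha hab hbN
    exact one_div_le_one_div_of_le (hpos b (le_trans ha hab) hbN) (hΛmono a b ha hab hbN)
  -- the water-level identity
  have hsumμ : ∑ j ∈ Finset.Icc 1 r, (μ - 1 / Λ j) = 1 := by
    have hcard : (Finset.Icc 1 r).card = r := by rw [Nat.card_Icc]; omega
    rw [Finset.sum_sub_distrib, Finset.sum_const, hcard, nsmul_eq_mul, hμ]
    field_simp
    ring
  have hμr : 1 / Λ r < μ := by rw [hμ]; exact hup r hr1 le_rfl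
  have hμj : ∀ j, 1 ≤ j → j ≤ r → 1 / Λ j < μ :=
    fun j h1 h2 => lt_of_le_of_lt (hinv_mono j r h1 h2 hrN) hμr
  -- n is monotone in t
  have hmonot : ∀ s t i, s ≤ t → n s i ≤ n t i := by
    intro s t i hst
    induction t, hst using Nat.le_induction with
    | base => exact le_refl _
    | succ t hst ih => rw [hrec t i]; omega
  -- total number of blocks
  have hsum : ∀ t, ∑ i ∈ S, n t i = t := by
    intro t
    induction t with
    | zero => simp [hzero]
    | succ t ih =>
      rw [Finset.sum_congr rfl (fun i _ => hrec t i), Finset.sum_add_distrib, ih,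
        Finset.sum_ite_eq' S (c t) (fun _ => 1), if_pos (spec t).1]
  -- heights are nonneg above 1/Λ
  have hHge : ∀ t i, 1 / Λ i ≤ H t i := by
    intro t i
    rw [hH]
    have : (0:ℝ) ≤ (n t i : ℝ) / m := by positivity
    simp only [le_add_iff_nonneg_right]
    exact this
  -- L1 : before the last step, the minimum height is below μ
  have L1 : ∀ t, t < m → H t (c t) < μ := by
    intro t htm
    by_contra hcon
    push_neg at hcon
    have hall : ∀ j ∈ Finset.Icc 1 r, μ - 1 / Λ j ≤ (n t j : ℝ) / m := by
      intro j hj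
      have := le_trans hcon ((spec t).2.1 j (hIccS hj))
      rw [hH] at this
      simp only at this
      linarith
    have h1 : (1:ℝ) ≤ ∑ j ∈ Finset.Icc 1 r, (n t j : ℝ) / m := by
      rw [← hsumμ]; exact Finset.sum_le_sum hall
    have h3 : ∑ j ∈ Finset.Icc 1 r, n t j ≤ t :=
      le_trans (Finset.sum_le_sum_of_subset hIccS) (hsum t).le
    have h4 : ((∑ j ∈ Finset.Icc 1 r, n t j : ℕ) : ℝ) ≤ (t:ℝ) := by exact_mod_cast h3
    have h5 : (t:ℝ) < (m:ℝ) := by exact_mod_cast htm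
    have h2 : ∑ j ∈ Finset.Icc 1 r, (n t j : ℝ) / m ≤ (t:ℝ) / m := by
      rw [← Finset.sum_div]
      gcongr
      push_cast at h4 ⊢; exact h4
    have h6 : (t:ℝ) / m < 1 := (div_lt_one hm0).mpr h5
    linarith
  -- L2 : channels beyond r never receive a block
  have L2 : ∀ t, t ≤ m → ∀ i, r < i → n t i = 0 := by
    intro t
    induction t with
    | zero => intro _ i _; exact hzero i
    | succ t ih =>
      intro htm i hri
      have htm' : t < m := htm
      rw [hrec t i, ih (le_of_lt htm') i hri]
      have hne : i ≠ c t := by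
        intro he
        -- the chosen channel c t would exceed r
        have hct : r < c t := he ▸ hri
        have hctS := (spec t).1
        rw [hS, Finset.mem_Icc] at hctS
        have hctN : c t ≤ N := hctS.2
        have hct1 : 1 ≤ c t := hctS.1
        rcases lt_or_eq_of_le hrq with hlt | heq
        · -- r < min m N : use hdown at r + 1
          have hr1q : r + 1 ≤ m ⊓ N := hlt
          have hr1N : r + 1 ≤ N := le_trans hr1q (min_le_right m N)
          have hd := hdown (r+1) (Nat.lt_succ_self r) hr1q
          have hsplit : ∑ j ∈ Finset.Icc 1 (r+1), 1 / Λ j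
              = (∑ j ∈ Finset.Icc 1 r, 1 / Λ j) + 1 / Λ (r+1) := by
            rw [← Finset.sum_Icc_succ_top (by omega : 1 ≤ r + 1)]
          rw [hsplit] at hd
          push_cast at hd
          have hr10 : (0:ℝ) < (r:ℝ) + 1 := by positivity
          have hd' : 1 + (∑ j ∈ Finset.Icc 1 r, 1 / Λ j) + 1 / Λ (r+1)
              ≤ ((r:ℝ) + 1) * (1 / Λ (r+1)) := by
            rw [div_mul_eq_mul_div, div_le_iff₀ hr10] at hd
            push_cast at hd
            linarith
          have hμle : μ ≤ 1 / Λ (r+1) := by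
            rw [hμ, div_mul_eq_mul_div, div_le_iff₀ hr0]
            nlinarith
          have h7 : μ ≤ 1 / Λ (c t) :=
            le_trans hμle (hinv_mono (r+1) (c t) (by omega) (by omega) hctN)
          have := lt_of_le_of_lt (le_trans h7 (hHge t (c t))) (L1 t htm')
          exact lt_irrefl _ this
        · -- r = min m N
          rcases le_total m N with hmN | hNm
          · -- q = m, so r = m : counting argument
            have hrm : r = m := by omega
            have hone : ∀ j ∈ Finset.Icc 1 r, 1 ≤ n t j := by
              intro j hj
              rw [Finset.mem_Icc] at hj
              have hjS : j ∈ S := hIccS (Finset.mem_Icc.mpr hj)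
              have hjct : j < c t := lt_of_le_of_lt hj.2 hct
              have hstrict : H t (c t) < H t j := by
                rcases lt_or_ge (H t (c t)) (H t j) with h | h
                · exact h
                · exact absurd ((spec t).2.2 j hjS h) (by omega)
              have hlam : 1 / Λ j ≤ 1 / Λ (c t) :=
                hinv_mono j (c t) hj.1 (le_of_lt hjct) hctN
              have := lt_of_le_of_lt (le_trans hlam (hHge t (c t))) hstrict
              rw [hH] at this
              simp only at this
              have hq0 : (0:ℝ) < (n t j : ℝ) / m := by linarith
              rcases Nat.eq_zero_or_pos (n t j) with h0 | h0
              · rw [h0] at hq0; norm_num at hq0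
              · exact h0
            have hcount : r ≤ ∑ j ∈ Finset.Icc 1 r, n t j := by
              calc r = ∑ j ∈ Finset.Icc 1 r, 1 := by
                    rw [Finset.sum_const, Nat.card_Icc, smul_eq_mul]; omega
                _ ≤ _ := Finset.sum_le_sum hone
            have := le_trans (Finset.sum_le_sum_of_subset hIccS) (hsum t).le
            omega
          · -- q = N : impossible since c t ≤ N = r
            have : r = N := by omega
            omega
      rw [if_neg (fun he => hne he)]
  -- L3 : every loaded channel has a last block-addition step
  have L3 : ∀ t k, 0 < n t k → ∃ s, s < t ∧ c s = k ∧ n t k = n s k + 1 := by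
    intro t
    induction t with
    | zero => intro k hk; rw [hzero k] at hk; omega
    | succ t ih =>
      intro k hk
      by_cases hkc : k = c t
      · exact ⟨t, Nat.lt_succ_self t, hkc.symm, by rw [hrec t k, if_pos hkc]⟩
      · rw [hrec t k, if_neg hkc] at hk ⊢
        simp only [add_zero] at hk ⊢
        obtain ⟨s, hs, hcs, heq⟩ := ih k hk
        exact ⟨s, Nat.lt_succ_of_lt hs, hcs, heq⟩
  -- the final height of a loaded channel equals a past minimum plus 1/m
  have hHeq : ∀ k, 0 < n m k → ∃ s, s < m ∧ H m k = H s (c s) + 1 / m := by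
    intro k hk
    obtain ⟨s, hs, hcs, heq⟩ := L3 m k hk
    refine ⟨s, hs, ?_⟩
    rw [hcs, hH]
    simp only
    rw [heq]
    push_cast
    ring
  -- L4 : lower bound for loaded channels
  have L4 : ∀ k, 1 ≤ k → k ≤ N → 0 < n m k → μ - 1 / m < H m k := by
    intro k hk1 hkN hk
    by_contra hcon
    push_neg at hcon
    have hkr : k ≤ r := by
      by_contra h; push_neg at h
      rw [L2 m le_rfl k h] at hk; omega
    have hkS : k ∈ S := by rw [hS, Finset.mem_Icc]; exact ⟨hk1, hkN⟩
    have hload : ∀ j, 0 < n m j → H m j ≤ μ := by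
      intro j hj
      obtain ⟨s, hs, hHmj⟩ := hHeq j hj
      have h1 : H s (c s) ≤ H s k := (spec s).2.1 k hkS
      have h2 : H s k ≤ H m k := by
        rw [hH]; simp only
        have hmn : (n s k : ℝ) ≤ (n m k : ℝ) := by
          exact_mod_cast hmonot s m k (le_of_lt hs)
        gcongr
      rw [hHmj]
      exact le_sub_iff_add_le.mp (le_trans (le_trans h1 h2) hcon)
    have hm1 : (0:ℝ) < 1 / m := by positivity
    have hbound : ∀ j ∈ Finset.Icc 1 r, (n m j : ℝ) / m ≤ μ - 1 / Λ j := by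
      intro j hj
      rw [Finset.mem_Icc] at hj
      rcases Nat.eq_zero_or_pos (n m j) with h0 | h0
      · have hx := hμj j hj.1 hj.2
        rw [h0]
        push_cast
        rw [zero_div]
        linarith
      · have := hload j h0
        rw [hH] at this; simp only at this; linarith
    have hstrictk : (n m k : ℝ) / m < μ - 1 / Λ k := by
      have h := hcon
      rw [hH] at h; simp only at h
      linarith
    have hsum_lt : ∑ j ∈ Finset.Icc 1 r, (n m j : ℝ) / m
        < ∑ j ∈ Finset.Icc 1 r, (μ - 1 / Λ j) :=
      Finset.sum_lt_sum hbound ⟨k, Finset.mem_Icc.mpr ⟨hk1, hkr⟩, hstrictk⟩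
    rw [hsumμ] at hsum_lt
    have hout : ∀ x ∈ S, x ∉ Finset.Icc 1 r → n m x = 0 := by
      intro x hx hnx
      rw [hS, Finset.mem_Icc] at hx
      rw [Finset.mem_Icc] at hnx
      exact L2 m le_rfl x (by omega)
    have hfull : ∑ j ∈ Finset.Icc 1 r, n m j = m := by
      rw [Finset.sum_subset hIccS hout, hsum m]
    have hcast : ∑ j ∈ Finset.Icc 1 r, (n m j : ℝ) / m = 1 := by
      rw [← Finset.sum_div, div_eq_one_iff_eq (ne_of_gt hm0)]
      exact_mod_cast hfull
    rw [hcast] at hsum_lt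
    exact lt_irrefl _ hsum_lt
  constructor
  · intro k hk1 hkN hgk
    have h1 := L4 k hk1 hkN hgk
    obtain ⟨s, hs, hHmk⟩ := hHeq k hgk
    have h2 : H m k < μ + 1 / m := by
      rw [hHmk]
      exact add_lt_add_left (L1 s hs) _
    rw [hH] at h1 h2
    simp only at h1 h2
    constructor <;> linarith
  · intro i hri hiN
    exact L2 m le_rfl i hri
end

section
/- Let P_0 be the real 2×2 matrix with rows (3, 2) and (2, 3), and let a_1 := (√((5 − √21)/10), √((5 + √21)/10)) and a_2 := (√((5 + √21)/10), √((5 − √21)/10)) in ℝ². Then ‖a_1‖ = ‖a_2‖ = 1 and det(P_0) · det(P_0^{−1} + a_1 a_1ᵀ + a_2 a_2ᵀ) = 64/5. -/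
open Matrix

lemma sqrt21_le : Real.sqrt 21 ≤ 5 := by
  nlinarith [Real.sq_sqrt (by norm_num : (21:ℝ) ≥ 0), Real.sqrt_nonneg (21:ℝ)]

lemma key_sq1 : Real.sqrt ((5 - Real.sqrt 21) / 10) ^ 2 = (5 - Real.sqrt 21) / 10 :=
  Real.sq_sqrt (by linarith [sqrt21_le])

lemma key_sq2 : Real.sqrt ((5 + Real.sqrt 21) / 10) ^ 2 = (5 + Real.sqrt 21) / 10 :=
  Real.sq_sqrt (by positivity)

lemma key_prod :
    Real.sqrt ((5 - Real.sqrt 21) / 10) * Real.sqrt ((5 + Real.sqrt 21) / 10) = 1 / 5 := by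
  rw [← Real.sqrt_mul (by linarith [sqrt21_le])]
  have h21 : Real.sqrt 21 ^ 2 = 21 := Real.sq_sqrt (by norm_num)
  have : (5 - Real.sqrt 21) / 10 * ((5 + Real.sqrt 21) / 10) = 1 / 25 := by nlinarith
  rw [this]
  rw [show (1:ℝ)/25 = (1/5)^2 by norm_num, Real.sqrt_sq (by norm_num)]

/-- **Optimal compressors in the scalar-measurement example.** With
`P₀ = [[3,2],[2,3]]`, the unit vectors `a₁ = (√((5−√21)/10), √((5+√21)/10))` and
`a₂ = (√((5+√21)/10), √((5−√21)/10))` achieve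
`det(P₀) · det(P₀⁻¹ + a₁a₁ᵀ + a₂a₂ᵀ) = 64/5 = 12.8`. -/
theorem optimal_example_value
    (P0 : Matrix (Fin 2) (Fin 2) ℝ) (hP0 : P0 = !![3, 2; 2, 3])
    (a1 a2 : EuclideanSpace ℝ (Fin 2))
    (ha1 : a1 = ![Real.sqrt ((5 - Real.sqrt 21) / 10), Real.sqrt ((5 + Real.sqrt 21) / 10)])
    (ha2 : a2 = ![Real.sqrt ((5 + Real.sqrt 21) / 10), Real.sqrt ((5 - Real.sqrt 21) / 10)]) :
    ‖a1‖ = 1 ∧ ‖a2‖ = 1 ∧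
    P0.det * (P0⁻¹ + vecMulVec a1 a1 + vecMulVec a2 a2).det = 64 / 5 := by
  set s := Real.sqrt ((5 - Real.sqrt 21) / 10) with hs
  set t := Real.sqrt ((5 + Real.sqrt 21) / 10) with ht
  have hsum : s ^ 2 + t ^ 2 = 1 := by rw [key_sq1, key_sq2]; ring
  have hst : s * t = 1 / 5 := key_prod
  have hn1 : ‖a1‖ = 1 := by
    rw [EuclideanSpace.norm_eq, ha1]
    rw [show (1:ℝ) = Real.sqrt 1 from (Real.sqrt_one).symm]
    congr 1
    simp [Fin.sum_univ_two, Real.norm_eq_abs, sq_abs]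
    nlinarith [hsum]
  have hn2 : ‖a2‖ = 1 := by
    rw [EuclideanSpace.norm_eq, ha2]
    rw [show (1:ℝ) = Real.sqrt 1 from (Real.sqrt_one).symm]
    congr 1
    simp [Fin.sum_univ_two, Real.norm_eq_abs, sq_abs]
    nlinarith [hsum]
  refine ⟨hn1, hn2, ?_⟩
  have hinv : P0⁻¹ = !![3/5, -2/5; -2/5, 3/5] := by
    apply Matrix.inv_eq_right_inv
    rw [hP0]
    norm_num [Matrix.mul_fin_two]
    exact Matrix.one_fin_two.symm
  have hM : P0⁻¹ + vecMulVec a1 a1 + vecMulVec a2 a2 = !![8/5, 0; 0, 8/5] := by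
    rw [hinv, ha1, ha2]
    ext i j
    fin_cases i <;> fin_cases j <;>
      simp [vecMulVec_apply, Matrix.vecHead, Matrix.vecTail] <;> nlinarith [hsum, hst]
  rw [hM, hP0]
  norm_num [Matrix.det_fin_two]
end

section
/- Let P_0 be the real 2×2 matrix with rows (3, 2) and (2, 3), and let a_1 := (1/√2)(1, 1) and a_2 := (1/√2)(1, −1) in ℝ². Then det(P_0) · det(P_0^{−1} + a_1 a_1ᵀ + a_2 a_2ᵀ) = 12, and 12 < 64/5; hence the greedy choice of compressors (a_1 the top unit eigenvector of P_0 and a_2 the top unit eigenvector of the updated covariance P_1) is strictly suboptimal for the net information gain. -/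
open Matrix

/-- **The greedy policy is strictly suboptimal in the scalar-measurement example.**
With `P₀ = [[3,2],[2,3]]` and the greedy compressors `a₁ = (1/√2)(1,1)` (top unit
eigenvector of `P₀`) and `a₂ = (1/√2)(1,−1)` (top unit eigenvector of the updated
covariance `P₁`), one has `det(P₀) · det(P₀⁻¹ + a₁a₁ᵀ + a₂a₂ᵀ) = 12 < 64/5`. -/
theorem greedy_example_suboptimal
    (P0 : Matrix (Fin 2) (Fin 2) ℝ) (hP0 : P0 = !![3, 2; 2, 3])
    (a1 a2 : EuclideanSpace ℝ (Fin 2))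
    (ha1 : a1 = ![1 / Real.sqrt 2, 1 / Real.sqrt 2])
    (ha2 : a2 = ![1 / Real.sqrt 2, -(1 / Real.sqrt 2)]) :
    P0.det * (P0⁻¹ + vecMulVec a1 a1 + vecMulVec a2 a2).det = 12 ∧
    (12 : ℝ) < 64 / 5 := by
  subst hP0
  rw [ha1, ha2]
  refine ⟨?_, by norm_num⟩
  have h2 : Real.sqrt 2 * Real.sqrt 2 = 2 := Real.mul_self_sqrt (by norm_num)
  have hs : Real.sqrt 2 ≠ 0 := by positivity
  simp only [Matrix.inv_def, Matrix.adjugate_fin_two_of, Matrix.det_fin_two_of,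
    vecMulVec, Matrix.det_fin_two, Matrix.add_apply, Matrix.smul_apply,
    Matrix.of_apply, Matrix.cons_val', Matrix.cons_val_zero, Matrix.cons_val_one,
    Matrix.head_cons, Matrix.head_fin_const, Matrix.empty_val',
    Matrix.cons_val_fin_one, smul_eq_mul, Ring.inverse_eq_inv']
  field_simp
  nlinarith [h2]
end

section
/- For α > 0 define g(α) := √α (1 + √α)(1 + √α + α) and h(α) := (1 + α)². Then for every α > 0, g(α) = det(D_g(α)) and h(α) = det(D_a(α)), where D_g(α) := Diag(1 + √α + α, √α + α) and D_a(α) := (1 + α)·I_2; and the ratio h(α)/g(α) tends to +∞ as α → 0⁺. Consequently, the ratio of det(P_2) under the greedy policy (namely 1/g(α)) to det(P_2) under the alternating policy (namely 1/h(α)) is unbounded as α → 0⁺. -/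
open Matrix Filter

/-- **The greedy policy is arbitrarily worse than the alternating policy.**
For `α > 0` let `g(α) := √α (1 + √α)(1 + √α + α)` and `h(α) := (1 + α)²`. Then
`g(α)` is the determinant of `D_g(α) = Diag(1 + √α + α, √α + α)` (the inverse
posterior covariance under the greedy policy) and `h(α)` is the determinant of
`D_a(α) = (1 + α) I₂` (under the alternating policy), and `h(α)/g(α) → +∞` as
`α → 0⁺`; hence the ratio of `det(P₂)` under the greedy policy (`1/g(α)`) to that
under the alternating policy (`1/h(α)`) is unbounded as `α → 0⁺`. -/
theorem greedy_arbitrarily_worse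
    (g h : ℝ → ℝ)
    (hg : ∀ α, g α = Real.sqrt α * (1 + Real.sqrt α) * (1 + Real.sqrt α + α))
    (hh : ∀ α, h α = (1 + α) ^ 2) :
    (∀ α : ℝ, 0 < α →
      g α = (Matrix.diagonal ![1 + Real.sqrt α + α, Real.sqrt α + α]).det ∧
      h α = ((1 + α) • (1 : Matrix (Fin 2) (Fin 2) ℝ)).det) ∧
    Tendsto (fun α => h α / g α) (nhdsWithin 0 (Set.Ioi 0)) atTop := by
  constructor
  · intro α hα
    constructor
    · rw [hg, Matrix.det_diagonal, Fin.prod_univ_two]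
      simp only [Matrix.cons_val_zero, Matrix.cons_val_one, Matrix.head_cons]
      have key : Real.sqrt α * (1 + Real.sqrt α) = Real.sqrt α + α := by
        have hs := Real.sq_sqrt hα.le
        nlinarith
      linear_combination (1 + Real.sqrt α + α) * key
    · rw [hh, Matrix.det_smul, Matrix.det_one, Fintype.card_fin]
      ring
  · have hg0 : Tendsto g (nhdsWithin 0 (Set.Ioi 0)) (nhdsWithin 0 (Set.Ioi 0)) := by
      apply tendsto_nhdsWithin_of_tendsto_nhds_of_eventually_within
      · have : Tendsto (fun α : ℝ => Real.sqrt α * (1 + Real.sqrt α) * (1 + Real.sqrt α + α))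
            (nhds 0) (nhds (Real.sqrt 0 * (1 + Real.sqrt 0) * (1 + Real.sqrt 0 + 0))) :=
          ((Real.continuous_sqrt.mul (continuous_const.add Real.continuous_sqrt)).mul
            ((continuous_const.add Real.continuous_sqrt).add continuous_id)).tendsto 0
        simp only [Real.sqrt_zero, mul_zero, zero_mul] at this
        have heq : g = fun α : ℝ => Real.sqrt α * (1 + Real.sqrt α) * (1 + Real.sqrt α + α) :=
          funext hg
        rw [heq]
        exact this.mono_left nhdsWithin_le_nhds
      · filter_upwards [self_mem_nhdsWithin] with α (hα : 0 < α)
        rw [hg]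
        have h1 : 0 < Real.sqrt α := Real.sqrt_pos.2 hα
        have : (0:ℝ) < Real.sqrt α * (1 + Real.sqrt α) * (1 + Real.sqrt α + α) := by positivity
        exact this
    have hginv : Tendsto (fun α => (g α)⁻¹) (nhdsWithin 0 (Set.Ioi 0)) atTop :=
      tendsto_inv_nhdsGT_zero.comp hg0
    have hh1 : Tendsto h (nhdsWithin 0 (Set.Ioi 0)) (nhds 1) := by
      have : Tendsto (fun α : ℝ => (1 + α) ^ 2) (nhds 0) (nhds ((1 + 0) ^ 2)) :=
        ((continuous_const.add continuous_id).pow 2).tendsto 0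
      simp only [add_zero, one_pow] at this
      have heq : h = fun α : ℝ => (1 + α) ^ 2 := funext hh
      rw [heq]
      exact this.mono_left nhdsWithin_le_nhds
    have := Filter.Tendsto.pos_mul_atTop (by norm_num : (0:ℝ) < 1) hh1 hginv
    simpa [div_eq_mul_inv] using this
end
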